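/- arXiv:2009.12512 — 8 statements merged into one kernel-verified Lean document; each statement's English description precedes it below -/
import Mathlib

section
/- There exists a constant c > 0 such that for every integer n > 1 and every real number p with p ≥ c·(n·log n)², every equilateral set in ℓ_p^n has cardinality at most 2(p+1)n. -/
/-- The ℓ_p distance on ℝ^n: `(∑ i, |x i - y i| ^ p) ^ (1/p)` (real exponents). -/
noncomputable def lpDist (p : ℝ) {n : ℕ} (x y : Fin n → ℝ) : ℝ :=
  (∑ i, |x i - y i| ^ p) ^ (1 / p)

/-- A finite set of points of ℝ^n is equilateral for the ℓ_p distance if all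
pairwise distances between distinct points equal a single positive value. -/
def IsEquilateral (p : ℝ) {n : ℕ} (S : Finset (Fin n → ℝ)) : Prop :=
  ∃ d : ℝ, 0 < d ∧ ∀ x ∈ S, ∀ y ∈ S, x ≠ y → lpDist p x y = d


open Real Finset

-- Lower/upper Bernoulli-type bounds
lemma aux_upper {θ v : ℝ} (hθ0 : 0 ≤ θ) (hθ1 : θ ≤ 1) (hv0 : 0 ≤ v) (hv : v ≤ 1/2) :
    (1 - v) ^ θ ≤ 1 - θ * v := by
  have h := Real.geom_mean_le_arith_mean2_weighted hθ0 (by linarith : (0:ℝ) ≤ 1 - θ)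
    (by linarith : (0:ℝ) ≤ 1 - v) zero_le_one (by ring)
  calc (1 - v) ^ θ = (1-v) ^ θ * 1 ^ (1 - θ) := by rw [Real.one_rpow, mul_one]
    _ ≤ θ * (1-v) + (1-θ) * 1 := h
    _ = 1 - θ * v := by ring

lemma aux_log_lower {v : ℝ} (hv0 : 0 ≤ v) (hv : v ≤ 1/2) :
    -(v + 2*v^2) ≤ Real.log (1 - v) := by
  have h1v : (0:ℝ) < 1 - v := by linarith
  rw [Real.le_log_iff_exp_le h1v]
  have h2 : (1:ℝ) + (v + 2*v^2) ≤ Real.exp (v + 2*v^2) := by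
    have := Real.add_one_le_exp (v + 2*v^2); linarith
  have h3 : Real.exp (-(v + 2*v^2)) = (Real.exp (v + 2*v^2))⁻¹ := by
    rw [Real.exp_neg]
  rw [h3]
  rw [inv_le_comm₀ (Real.exp_pos _) h1v]
  calc (1 - v)⁻¹ ≤ 1 + (v + 2*v^2) := by
        rw [← one_div, div_le_iff₀ h1v]; nlinarith
    _ ≤ Real.exp (v + 2*v^2) := h2

lemma aux_lower {θ v : ℝ} (hθ0 : 0 ≤ θ) (hθ1 : θ ≤ 1) (hv0 : 0 ≤ v) (hv : v ≤ 1/2) :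
    1 - θ * v - 2*v^2 ≤ (1 - v) ^ θ := by
  have h1v : (0:ℝ) < 1 - v := by linarith
  rw [Real.rpow_def_of_pos h1v]
  have hl := aux_log_lower hv0 hv
  have : θ * (-(v + 2*v^2)) ≤ θ * Real.log (1 - v) := by
    apply mul_le_mul_of_nonneg_left hl hθ0
  have h2 : 1 + θ * Real.log (1 - v) ≤ Real.exp (Real.log (1-v) * θ) := by
    rw [mul_comm (Real.log (1-v)) θ]
    have := Real.add_one_le_exp (θ * Real.log (1-v)); linarith
  nlinarith [h2, this, sq_nonneg v, mul_le_of_le_one_left (sq_nonneg v) hθ1]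

lemma aux_theta {θ v : ℝ} (hθ0 : 0 ≤ θ) (hθ1 : θ ≤ 1) (hv0 : 0 ≤ v) (hv : v ≤ 1/2) :
    |(1 - v) ^ θ - (1 - θ * v)| ≤ 2*v^2 := by
  rw [abs_le]
  constructor
  · nlinarith [aux_lower hθ0 hθ1 hv0 hv]
  · nlinarith [aux_upper hθ0 hθ1 hv0 hv, sq_nonneg v]

lemma aux_approx {q u ε : ℝ} (hq : 2 ≤ q) (hu0 : 0 ≤ u) (hu1 : u ≤ 1)
    (hε0 : 0 < ε) (hε : ε ≤ 1/2) :
    |u ^ q - ((1 - (q - ⌊q⌋₊)) * u ^ (⌊q⌋₊ : ℕ) + (q - ⌊q⌋₊) * u ^ ((⌊q⌋₊ : ℕ) + 1))| ≤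
      2*ε^2 + 2*(1-ε)^(⌊q⌋₊ : ℕ) := by
  set N : ℕ := ⌊q⌋₊ with hN
  have hq0 : (0:ℝ) ≤ q := by linarith
  have hNq : (N:ℝ) ≤ q := Nat.floor_le hq0
  have hqN : q < N + 1 := Nat.lt_floor_add_one q
  have hN1 : 1 ≤ N := Nat.le_floor (by exact_mod_cast (by linarith : (1:ℝ) ≤ q))
  set θ : ℝ := q - N with hθdef
  have hθ0 : 0 ≤ θ := by simp [hθdef]; linarith
  have hθ1 : θ ≤ 1 := by simp [hθdef]; linarith
  have hεpow0 : (0:ℝ) ≤ (1-ε)^N := pow_nonneg (by linarith) N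
  by_cases hcase : u ≤ 1 - ε
  · -- both terms small
    have h1 : u ^ q ≤ (1-ε)^N := by
      rcases eq_or_lt_of_le hu0 with h0 | hupos
    
      · rw [← h0, Real.zero_rpow (by linarith : q ≠ 0)]; exact hεpow0
      · calc u ^ q ≤ u ^ ((N:ℕ):ℝ) :=
              Real.rpow_le_rpow_of_exponent_ge hupos hu1 hNq
          _ = u ^ (N:ℕ) := Real.rpow_natCast u N
          _ ≤ (1-ε)^N := pow_le_pow_left₀ hu0 hcase N
    have h1' : (0:ℝ) ≤ u ^ q := Real.rpow_nonneg hu0 q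
    have h2 : (1 - θ) * u ^ N + θ * u ^ (N+1) ≤ (1-ε)^N := by
      have e1 : u ^ (N+1) ≤ u ^ N := pow_le_pow_of_le_one hu0 hu1 (by omega)
      have e2 : u ^ N ≤ (1-ε)^N := pow_le_pow_left₀ hu0 hcase N
      nlinarith [pow_nonneg hu0 N, pow_nonneg hu0 (N+1)]
    have h2' : (0:ℝ) ≤ (1 - θ) * u ^ N + θ * u ^ (N+1) := by
      have := pow_nonneg hu0 N; have := pow_nonneg hu0 (N+1); nlinarith
    rw [abs_le]; constructor <;> nlinarith [sq_nonneg ε]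
  · push_neg at hcase
    have hupos : (0:ℝ) < u := by linarith
    set v : ℝ := 1 - u with hv
    have hv0 : 0 ≤ v := by simp [hv]; linarith
    have hvε : v ≤ ε := by simp [hv]; linarith
    have hv12 : v ≤ 1/2 := by linarith
    have key : u ^ q = u ^ (N:ℕ) * (1 - v) ^ θ := by
      have : q = (N:ℝ) + θ := by ring
      rw [this, Real.rpow_add hupos, Real.rpow_natCast]
      have : 1 - v = u := by ring
      rw [this]
    have expand : (1 - θ) * u ^ N + θ * u ^ (N+1) = u ^ N * (1 - θ * v) := by
      simp only [hv]; rw [pow_succ]; ring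
    have hupow1 : u ^ N ≤ 1 := pow_le_one₀ hu0 hu1
    have hupow0 : 0 ≤ u ^ N := pow_nonneg hu0 N
    have hth := aux_theta hθ0 hθ1 hv0 hv12
    calc |u ^ q - ((1 - θ) * u ^ N + θ * u ^ (N+1))|
        = u ^ N * |(1 - v) ^ θ - (1 - θ * v)| := by
          rw [key, expand, ← mul_sub, abs_mul, abs_of_nonneg hupow0]
      _ ≤ 1 * (2*v^2) := by
          apply mul_le_mul hupow1 hth (abs_nonneg _) zero_le_one
      _ ≤ 2*ε^2 + 2*(1-ε)^N := by nlinarith [sq_nonneg v]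

lemma aux_core {ι K : Type*} [Fintype ι] [Fintype K]
    (hcard : Fintype.card K < Fintype.card ι)
    (v : ι → K → ℝ) (w : K → ι → ℝ) {η : ℝ}
    (hdiag : ∀ i, (1:ℝ) ≤ |∑ k, v i k * w k i|)
    (hoff : ∀ i j, i ≠ j → |∑ k, v i k * w k j| ≤ η)
    (hη : (Fintype.card ι : ℝ) * η < 1) : False := by
  classical
  have hnli : ¬ LinearIndependent ℝ v := by
    intro h
    have := h.fintype_card_le_finrank
    rw [Module.finrank_fintype_fun_eq_card] at this
    omega
  obtain ⟨c, hsum, i', hi'⟩ := Fintype.not_linearIndependent_iff.mp hnli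
  obtain ⟨i₀, -, hmax⟩ := Finset.exists_max_image Finset.univ (fun i => |c i|)
    ⟨i', Finset.mem_univ i'⟩
  have hc0 : 0 < |c i₀| :=
    lt_of_lt_of_le (abs_pos.mpr hi') (hmax i' (Finset.mem_univ i'))
  -- evaluate the dependency against column i₀
  have hcol : ∀ k, (∑ i, c i * v i k) = 0 := by
    intro k
    have := congrFun hsum k
    simpa [Finset.sum_apply] using this
  have heval : (∑ i, c i * ∑ k, v i k * w k i₀) = 0 := by
    calc (∑ i, c i * ∑ k, v i k * w k i₀)
        = ∑ i, ∑ k, c i * v i k * w k i₀ := by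
          apply Finset.sum_congr rfl; intro i _
          rw [Finset.mul_sum]; apply Finset.sum_congr rfl; intro k _; ring
      _ = ∑ k, ∑ i, c i * v i k * w k i₀ := Finset.sum_comm
      _ = ∑ k, (∑ i, c i * v i k) * w k i₀ := by
          apply Finset.sum_congr rfl; intro k _
          rw [Finset.sum_mul]
      _ = 0 := by simp [hcol]
  set B : ι → ℝ := fun i => ∑ k, v i k * w k i₀ with hB
  have hsplit : c i₀ * B i₀ = - ∑ i ∈ Finset.univ.erase i₀, c i * B i := by
    have h := Finset.add_sum_erase Finset.univ (fun i => c i * B i) (Finset.mem_univ i₀)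
    have htot : (∑ i, c i * B i) = 0 := heval
    linarith [h, htot]
  have hbound : |c i₀| * 1 ≤ ((Fintype.card ι : ℝ) - 1) * (|c i₀| * η) := by
    calc |c i₀| * 1 ≤ |c i₀| * |B i₀| := by
          apply mul_le_mul_of_nonneg_left (hdiag i₀) (abs_nonneg _)
      _ = |∑ i ∈ Finset.univ.erase i₀, c i * B i| := by
          rw [← abs_mul, hsplit, abs_neg]
      _ ≤ ∑ i ∈ Finset.univ.erase i₀, |c i * B i| := Finset.abs_sum_le_sum_abs _ _
      _ ≤ ∑ _i ∈ Finset.univ.erase i₀, |c i₀| * η := by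
          apply Finset.sum_le_sum
          intro i hi
          rw [abs_mul]
          have hne : i ≠ i₀ := (Finset.mem_erase.mp hi).1
          exact mul_le_mul (hmax i (Finset.mem_univ i)) (hoff i i₀ hne)
            (abs_nonneg _) (abs_nonneg _)
      _ = ((Fintype.card ι : ℝ) - 1) * (|c i₀| * η) := by
          rw [Finset.sum_const, Finset.card_erase_of_mem (Finset.mem_univ i₀)]
          rw [nsmul_eq_mul, Finset.card_univ]
          have h1 : 1 ≤ Fintype.card ι := by omega
          rw [Nat.cast_sub h1]
          simp
  rcases le_or_gt η 0 with hle | hpos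
  · have h1 : 1 ≤ (Fintype.card ι : ℝ) := by exact_mod_cast Nat.one_le_iff_ne_zero.mpr (by omega)
    nlinarith [mul_nonneg (sub_nonneg.mpr h1) (mul_nonneg hc0.le (neg_nonneg.mpr hle))]
  · have h1 : ((Fintype.card ι : ℝ) - 1) * (|c i₀| * η) < (Fintype.card ι : ℝ) * η * |c i₀| := by
      nlinarith
    nlinarith [mul_lt_mul_of_pos_right hη hc0]

lemma aux_expand (N : ℕ) (θ a b : ℝ) :
    ∑ r ∈ Finset.range (2*N+3), a^r *
      ((1-θ) * ((-b)^(2*N - r) * (Nat.choose (2*N) r : ℝ))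
        + θ * ((-b)^(2*N+2 - r) * (Nat.choose (2*N+2) r : ℝ)))
    = (1-θ) * (a-b)^(2*N) + θ * (a-b)^(2*N+2) := by
  have key : ∀ m : ℕ, ∑ r ∈ Finset.range (m+1),
      a^r * ((-b)^(m-r) * (Nat.choose m r : ℝ)) = (a-b)^m := by
    intro m
    rw [sub_eq_add_neg, add_pow]
    apply Finset.sum_congr rfl; intro r _; ring
  have ext2 : ∀ m k : ℕ, m + 1 ≤ k → ∑ r ∈ Finset.range k,
      a^r * ((-b)^(m-r) * (Nat.choose m r : ℝ)) = (a-b)^m := by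
    intro m k h
    rw [← key m]
    symm
    apply Finset.sum_subset (Finset.range_subset_range.mpr h)
    intro r _ hr
    rw [Finset.mem_range, not_lt] at hr
    rw [Nat.choose_eq_zero_of_lt (by omega)]
    simp
  calc ∑ r ∈ Finset.range (2*N+3), a^r *
      ((1-θ) * ((-b)^(2*N - r) * (Nat.choose (2*N) r : ℝ))
        + θ * ((-b)^(2*N+2 - r) * (Nat.choose (2*N+2) r : ℝ)))
      = ∑ r ∈ Finset.range (2*N+3),
        ((1-θ) * (a^r * ((-b)^(2*N - r) * (Nat.choose (2*N) r : ℝ)))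
          + θ * (a^r * ((-b)^(2*N+2 - r) * (Nat.choose (2*N+2) r : ℝ)))) := by
        apply Finset.sum_congr rfl; intro r _; ring
    _ = (1-θ) * ∑ r ∈ Finset.range (2*N+3), a^r * ((-b)^(2*N - r) * (Nat.choose (2*N) r : ℝ))
          + θ * ∑ r ∈ Finset.range (2*N+3), a^r * ((-b)^(2*N+2 - r) * (Nat.choose (2*N+2) r : ℝ)) := by
        rw [Finset.sum_add_distrib, Finset.mul_sum, Finset.mul_sum]
    _ = (1-θ) * (a-b)^(2*N) + θ * (a-b)^(2*N+2) := by
        rw [ext2 (2*N) (2*N+3) (by omega), ext2 (2*N+2) (2*N+3) (by omega)]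

lemma aux_numeric {n p : ℝ} (hn : 2 ≤ n) (hp : 2^54 * (n * Real.log n)^2 ≤ p) :
    32 * n * Real.log (64 * p * n^2) ≤ Real.sqrt p := by
  have hl2a : 0.6931 ≤ Real.log 2 := by linarith [Real.log_two_gt_d9]
  have hl2b : Real.log 2 ≤ 0.6932 := by linarith [Real.log_two_lt_d9]
  set L : ℝ := Real.log n with hLdef
  have hL : 0.6931 ≤ L := by
    have : Real.log 2 ≤ Real.log n := Real.log_le_log (by norm_num) hn
    linarith
  have hn0 : (0:ℝ) < n := by linarith
  have hnL0 : 0 < n * L := by nlinarith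
  have hp0 : (0:ℝ) < p := by nlinarith
  set s : ℝ := Real.sqrt p with hsdef
  have hs0 : 0 < s := Real.sqrt_pos.mpr hp0
  set s₀ : ℝ := 2^27 * n * L with hs₀def
  have hs₀0 : 0 < s₀ := by positivity
  have hss₀ : s₀ ≤ s := by
    have h1 : (2:ℝ)^54 * (n * L)^2 = s₀^2 := by rw [hs₀def]; ring
    have h2 : Real.sqrt (s₀^2) ≤ s := Real.sqrt_le_sqrt (by linarith)
    rwa [Real.sqrt_sq hs₀0.le] at h2
  have hps : p = s^2 := (Real.sq_sqrt hp0.le).symm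
  have hlogp : Real.log p = 2 * Real.log s := by
    rw [hps, Real.log_pow]; push_cast; ring
  have hlog64 : Real.log 64 = 6 * Real.log 2 := by
    have : (64:ℝ) = 2^6 := by norm_num
    rw [this, Real.log_pow]; push_cast; ring
  have hsplit : Real.log (64 * p * n^2) = 6 * Real.log 2 + 2 * Real.log s + 2 * L := by
    rw [Real.log_mul (by positivity) (by positivity), Real.log_mul (by norm_num) (by positivity),
      hlog64, hlogp, Real.log_pow]
    push_cast; ring
  have hlogs₀ : Real.log s₀ = 27 * Real.log 2 + L + Real.log L := by
    rw [hs₀def, Real.log_mul (by positivity) (by positivity),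
      Real.log_mul (by positivity) (by positivity), Real.log_pow]
    push_cast; ring
  have hlogL : Real.log L ≤ L - 1 := Real.log_le_sub_one_of_pos (by linarith)
  have hlogs : Real.log s ≤ Real.log s₀ + (s/s₀ - 1) := by
    have h1 : Real.log (s/s₀) ≤ s/s₀ - 1 := Real.log_le_sub_one_of_pos (by positivity)
    rw [Real.log_div hs0.ne' hs₀0.ne'] at h1
    linarith
  have hdiv : 64 * n * (s/s₀) ≤ s/2 := by
    have he : 64 * n * (s/s₀) = s/(2^21 * L) := by
      rw [hs₀def]; field_simp; ring
    rw [he]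
    apply div_le_div_of_nonneg_left hs0.le (by norm_num)
    nlinarith
  have hls : Real.log s ≤ 27 * Real.log 2 + 2*L - 2 + s/s₀ := by
    rw [hlogs₀] at hlogs; linarith
  rw [hsplit]
  have hmain : 32 * n * (6 * Real.log 2 + 2 * Real.log s + 2 * L)
      ≤ 32 * n * (60 * Real.log 2 + 6*L - 4) + 64 * n * (s/s₀) := by
    nlinarith [hls, hn0]
  have hfin : 32 * n * (60 * Real.log 2 + 6*L - 4) ≤ s/2 := by
    nlinarith [hss₀, mul_nonneg hn0.le (by linarith : (0:ℝ) ≤ L - 0.6931), hn0, hL]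
  linarith


lemma aux_sq_rpow (t p : ℝ) : (t^2) ^ (p/2) = |t| ^ p := by
  rw [← sq_abs, ← Real.rpow_natCast |t| 2, ← Real.rpow_mul (abs_nonneg t)]
  congr 1
  push_cast; ring


set_option maxHeartbeats 1000000 in
theorem equilateral_lp_large_p :
    ∃ c : ℝ, 0 < c ∧ ∀ n : ℕ, 1 < n → ∀ p : ℝ,
      c * ((n : ℝ) * Real.log n) ^ 2 ≤ p →
      ∀ S : Finset (Fin n → ℝ), IsEquilateral p S →
        (S.card : ℝ) ≤ 2 * (p + 1) * n := by
  classical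
  refine ⟨2^54, by norm_num, ?_⟩
  intro n hn p hp S hS
  by_contra hcon
  push_neg at hcon
  obtain ⟨d, hd, hdist⟩ := hS
  have hn2 : (2:ℝ) ≤ (n:ℝ) := by exact_mod_cast hn
  have hn0 : (0:ℝ) < n := by linarith
  have hL : 0.6931 ≤ Real.log n := by
    have := Real.log_le_log (by norm_num : (0:ℝ) < 2) hn2
    linarith [Real.log_two_gt_d9]
  have hnL1 : (1:ℝ) ≤ (n:ℝ) * Real.log n := by nlinarith
  have hnLsq : (1:ℝ) ≤ ((n:ℝ) * Real.log n)^2 := by nlinarith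
  have hp4 : 4 ≤ p := by nlinarith [hp, hnLsq]
  have hp0 : 0 < p := by linarith
  -- parameters
  set q : ℝ := p/2 with hqdef
  have hq2 : 2 ≤ q := by rw [hqdef]; linarith
  set N : ℕ := ⌊q⌋₊ with hNdef
  have hNq : (N:ℝ) ≤ q := Nat.floor_le (by linarith)
  have hqN : q < N + 1 := Nat.lt_floor_add_one q
  have hN1 : 1 ≤ N := Nat.le_floor (by exact_mod_cast (by linarith : (1:ℝ) ≤ q))
  have hNp4 : p/4 ≤ (N:ℝ) := by linarith
  set θ : ℝ := q - N with hθdef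
  have hsp0 : 0 < Real.sqrt p := Real.sqrt_pos.mpr hp0
  have hsp2 : p = Real.sqrt p ^ 2 := (Real.sq_sqrt hp0.le).symm
  have hsp1 : 1 ≤ Real.sqrt p := by nlinarith
  set ε : ℝ := 1/(8 * n * Real.sqrt p) with hεdef
  have hε0 : 0 < ε := by positivity
  have hε12 : ε ≤ 1/2 := by
    rw [hεdef, div_le_div_iff₀ (by positivity) (by norm_num)]
    nlinarith
  set δ : ℝ := 2*ε^2 + 2*(1-ε)^N with hδdef
  have hδ0 : 0 ≤ δ := by
    have : (0:ℝ) ≤ (1-ε)^N := pow_nonneg (by linarith) N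
    positivity
  -- numeric bound on δ
  have hδbound : δ ≤ 1/(16*p*(n:ℝ)^2) := by
    have he1 : 2*ε^2 = 1/(32*p*(n:ℝ)^2) := by
      rw [hεdef]
      field_simp
      nlinarith [hsp2]
    have he2 : (1-ε)^N ≤ 1/(64*p*(n:ℝ)^2) := by
      have ha : 1 - ε ≤ Real.exp (-ε) := by
        have := Real.add_one_le_exp (-ε); linarith
      have hb : (1-ε)^N ≤ Real.exp (-ε)^N := pow_le_pow_left₀ (by linarith) ha N
      have hc : Real.exp (-ε)^N = Real.exp ((N:ℝ) * (-ε)) := (Real.exp_nat_mul _ N).symm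
      have hd1 : Real.log (64 * p * (n:ℝ)^2) ≤ (N:ℝ) * ε := by
        have hnum := aux_numeric hn2 hp
        have h1 : Real.log (64 * p * (n:ℝ)^2) ≤ Real.sqrt p / (32*(n:ℝ)) := by
          rw [le_div_iff₀ (by positivity : (0:ℝ) < 32*(n:ℝ))]
          nlinarith [hnum]
        have h2 : Real.sqrt p / (32*(n:ℝ)) ≤ (N:ℝ) * ε := by
          rw [hεdef]
          rw [div_le_iff₀ (by positivity)]
          have : (N:ℝ) * (1/(8 * n * Real.sqrt p)) * (32*n) = (N:ℝ) * 4 / Real.sqrt p := by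
            field_simp; ring
          rw [this, le_div_iff₀ hsp0]
          nlinarith
        linarith
      have he : Real.exp ((N:ℝ) * (-ε)) ≤ 1/(64*p*(n:ℝ)^2) := by
        have h1 : Real.exp ((N:ℝ) * (-ε)) ≤ Real.exp (-(Real.log (64*p*(n:ℝ)^2))) := by
          apply Real.exp_le_exp.mpr; linarith [hd1]
        have h2 : Real.exp (-(Real.log (64*p*(n:ℝ)^2))) = 1/(64*p*(n:ℝ)^2) := by
          rw [Real.exp_neg, Real.exp_log (by positivity), one_div]
        linarith
      calc (1-ε)^N ≤ Real.exp (-ε)^N := hb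
        _ = Real.exp ((N:ℝ) * (-ε)) := hc
        _ ≤ 1/(64*p*(n:ℝ)^2) := he
    rw [hδdef, he1]
    have : 2*(1-ε)^N ≤ 2*(1/(64*p*(n:ℝ)^2)) := by linarith
    have hfin : 1/(32*p*(n:ℝ)^2) + 2*(1/(64*p*(n:ℝ)^2)) = 1/(16*p*(n:ℝ)^2) := by
      field_simp; ring
    linarith
  -- choose a subset of size M₀
  set M₀ : ℕ := n*(2*N+3) + 2 with hM₀def
  have h2Np : 2*(N:ℝ) ≤ p := by rw [hqdef] at hNq; linarith
  have hM₀le : (M₀:ℝ) ≤ 2*(n:ℝ)*p := by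
    rw [hM₀def]; push_cast
    nlinarith [h2Np, hn2, hp4, hn0]
  have hM₀S : M₀ ≤ S.card := by
    have h1 : (M₀:ℝ) ≤ 2*(p+1)*(n:ℝ) := by
      rw [hM₀def]; push_cast
      nlinarith [h2Np, hn2, hp4, hn0]
    have h2 : (M₀:ℝ) < (S.card:ℝ) := lt_of_le_of_lt h1 hcon
    exact_mod_cast h2.le
  obtain ⟨T, hTS, hTcard⟩ := Finset.exists_subset_card_eq hM₀S
  -- scaled points
  set z : {x // x ∈ T} → Fin n → ℝ := fun x k => (x : Fin n → ℝ) k / d with hzdef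
  have hcardι : Fintype.card {x // x ∈ T} = M₀ := by rw [Fintype.card_coe, hTcard]
  have hpair : ∀ x y : {x // x ∈ T}, x ≠ y → ∑ k, |z x k - z y k| ^ p = 1 := by
    intro x y hxy
    have hne : (x : Fin n → ℝ) ≠ (y : Fin n → ℝ) := fun h => hxy (Subtype.ext h)
    have hdxy := hdist x (hTS x.2) y (hTS y.2) hne
    unfold lpDist at hdxy
    have hsum0 : 0 ≤ ∑ k, |(x:Fin n → ℝ) k - (y:Fin n → ℝ) k| ^ p :=
      Finset.sum_nonneg fun k _ => Real.rpow_nonneg (abs_nonneg _) p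
    have hsum : ∑ k, |(x:Fin n → ℝ) k - (y:Fin n → ℝ) k| ^ p = d ^ p := by
      have h1 := congrArg (· ^ p) hdxy
      rwa [← Real.rpow_mul hsum0, one_div, inv_mul_cancel₀ hp0.ne', Real.rpow_one] at h1
    have hdpow : (0:ℝ) < d ^ p := Real.rpow_pos_of_pos hd p
    calc ∑ k, |z x k - z y k| ^ p
        = ∑ k, |(x:Fin n → ℝ) k - (y:Fin n → ℝ) k| ^ p / d ^ p := by
          apply Finset.sum_congr rfl; intro k _
          rw [hzdef]
          have he : (x:Fin n → ℝ) k / d - (y:Fin n → ℝ) k / d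
              = ((x:Fin n → ℝ) k - (y:Fin n → ℝ) k)/d := by ring
          rw [he, abs_div, abs_of_pos hd, Real.div_rpow (abs_nonneg _) hd.le]
      _ = (∑ k, |(x:Fin n → ℝ) k - (y:Fin n → ℝ) k| ^ p) / d ^ p := by
          rw [Finset.sum_div]
      _ = 1 := by rw [hsum]; field_simp
  have hcoord : ∀ x y : {x // x ∈ T}, x ≠ y → ∀ k, |z x k - z y k| ≤ 1 := by
    intro x y hxy k
    by_contra hgt; push_neg at hgt
    have h1 : (1:ℝ) < |z x k - z y k| ^ p := by
      have := Real.rpow_lt_rpow (by norm_num : (0:ℝ) ≤ 1) hgt hp0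
      rwa [Real.one_rpow] at this
    have hle : |z x k - z y k| ^ p ≤ ∑ j, |z x j - z y j| ^ p :=
      Finset.single_le_sum (f := fun j => |z x j - z y j| ^ p)
        (fun j _ => Real.rpow_nonneg (abs_nonneg _) p) (Finset.mem_univ k)
    rw [hpair x y hxy] at hle; linarith
  -- feature maps
  have hcardK : Fintype.card (Option (Fin n × Fin (2*N+3))) = n*(2*N+3) + 1 := by
    simp
  set v : {x // x ∈ T} → Option (Fin n × Fin (2*N+3)) → ℝ :=
    fun x k => Option.elim k 1 (fun jr => (z x jr.1)^(jr.2:ℕ)) with hv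
  set w : Option (Fin n × Fin (2*N+3)) → {x // x ∈ T} → ℝ :=
    fun k y => Option.elim k 1 (fun jr =>
      -((1-θ) * ((-(z y jr.1))^(2*N - (jr.2:ℕ)) * (Nat.choose (2*N) (jr.2:ℕ) : ℝ))
        + θ * ((-(z y jr.1))^(2*N+2 - (jr.2:ℕ)) * (Nat.choose (2*N+2) (jr.2:ℕ) : ℝ)))) with hw
  have hBval : ∀ x y : {x // x ∈ T}, (∑ k, v x k * w k y)
      = 1 - ∑ j : Fin n, ((1-θ) * (z x j - z y j)^(2*N) + θ * (z x j - z y j)^(2*N+2)) := by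
    intro x y
    have hinner : ∀ j : Fin n, ∑ r : Fin (2*N+3), (z x j)^(r:ℕ) *
        ((1-θ) * ((-(z y j))^(2*N - (r:ℕ)) * (Nat.choose (2*N) (r:ℕ) : ℝ))
          + θ * ((-(z y j))^(2*N+2 - (r:ℕ)) * (Nat.choose (2*N+2) (r:ℕ) : ℝ)))
        = (1-θ) * (z x j - z y j)^(2*N) + θ * (z x j - z y j)^(2*N+2) := by
      intro j
      rw [← aux_expand N θ (z x j) (z y j)]
      exact Fin.sum_univ_eq_sum_range (fun r => (z x j)^r *
        ((1-θ) * ((-(z y j))^(2*N - r) * (Nat.choose (2*N) r : ℝ))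
          + θ * ((-(z y j))^(2*N+2 - r) * (Nat.choose (2*N+2) r : ℝ)))) (2*N+3)
    calc ∑ k, v x k * w k y
        = v x none * w none y
          + ∑ jr : Fin n × Fin (2*N+3), v x (some jr) * w (some jr) y := by
          exact Fintype.sum_option _
      _ = 1 - ∑ j : Fin n, ∑ r : Fin (2*N+3), (z x j)^(r:ℕ) *
            ((1-θ) * ((-(z y j))^(2*N - (r:ℕ)) * (Nat.choose (2*N) (r:ℕ) : ℝ))
              + θ * ((-(z y j))^(2*N+2 - (r:ℕ)) * (Nat.choose (2*N+2) (r:ℕ) : ℝ))) := by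
          rw [Fintype.sum_prod_type]
          simp only [hv, hw, Option.elim, mul_neg, mul_one, one_mul, Finset.sum_neg_distrib]
          ring
      _ = 1 - ∑ j : Fin n, ((1-θ) * (z x j - z y j)^(2*N) + θ * (z x j - z y j)^(2*N+2)) := by
          rw [Finset.sum_congr rfl (fun j _ => hinner j)]
  have hdiag : ∀ x : {x // x ∈ T}, (1:ℝ) ≤ |∑ k, v x k * w k x| := by
    intro x
    rw [hBval x x]
    have : ∀ j : Fin n, (1-θ) * (z x j - z x j)^(2*N) + θ * (z x j - z x j)^(2*N+2) = 0 := by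
      intro j
      rw [sub_self, zero_pow (by omega : 2*N ≠ 0), zero_pow (by omega : 2*N+2 ≠ 0)]
      ring
    rw [Finset.sum_congr rfl (fun j _ => this j)]
    simp
  have hθ0 : 0 ≤ θ := by rw [hθdef]; linarith
  have hθ1 : θ ≤ 1 := by rw [hθdef]; linarith
  have hoff : ∀ x y : {x // x ∈ T}, x ≠ y → |∑ k, v x k * w k y| ≤ (n:ℝ) * δ := by
    intro x y hxy
    have hrw : (1:ℝ) - ∑ j : Fin n, ((1-θ) * (z x j - z y j)^(2*N) + θ * (z x j - z y j)^(2*N+2))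
        = ∑ j : Fin n, (|z x j - z y j| ^ p
            - ((1-θ) * (z x j - z y j)^(2*N) + θ * (z x j - z y j)^(2*N+2))) := by
      rw [Finset.sum_sub_distrib, hpair x y hxy]
    rw [hBval x y, hrw]
    calc |∑ j, (|z x j - z y j| ^ p
            - ((1-θ) * (z x j - z y j)^(2*N) + θ * (z x j - z y j)^(2*N+2)))|
        ≤ ∑ j, |(|z x j - z y j| ^ p
            - ((1-θ) * (z x j - z y j)^(2*N) + θ * (z x j - z y j)^(2*N+2)))| :=
          Finset.abs_sum_le_sum_abs _ _
      _ ≤ ∑ _j : Fin n, δ := by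
          apply Finset.sum_le_sum
          intro j _
          set Δ : ℝ := z x j - z y j with hΔ
          have hu1 : Δ^2 ≤ 1 := by
            have := hcoord x y hxy j
            rw [← hΔ] at this
            nlinarith [abs_nonneg Δ, sq_abs Δ]
          have happ := aux_approx hq2 (sq_nonneg Δ) hu1 hε0 hε12
          rw [← hNdef] at happ
          rw [aux_sq_rpow Δ p] at happ
          have e1 : (Δ^2)^N = Δ^(2*N) := (pow_mul Δ 2 N).symm
          have e2 : (Δ^2)^(N+1) = Δ^(2*N+2) := by
            rw [show 2*N+2 = 2*(N+1) by ring, pow_mul]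
          rw [e1, e2, ← hθdef] at happ
          rw [← hδdef] at happ
          exact happ
      _ = (n:ℝ) * δ := by rw [Finset.sum_const]; simp [mul_comm]
  have hη : (Fintype.card {x // x ∈ T} : ℝ) * ((n:ℝ)*δ) < 1 := by
    rw [hcardι]
    have h2 : (M₀:ℝ) * ((n:ℝ)*δ) ≤ (2*(n:ℝ)*p) * ((n:ℝ)*δ) :=
      mul_le_mul_of_nonneg_right hM₀le (mul_nonneg hn0.le hδ0)
    have h3 : (2*(n:ℝ)*p) * ((n:ℝ)*δ) ≤ (2*(n:ℝ)*p) * ((n:ℝ)*(1/(16*p*(n:ℝ)^2))) := by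
      apply mul_le_mul_of_nonneg_left (mul_le_mul_of_nonneg_left hδbound hn0.le) (by positivity)
    have h4 : (2*(n:ℝ)*p) * ((n:ℝ)*(1/(16*p*(n:ℝ)^2))) = 1/8 := by
      field_simp; ring
    calc (M₀:ℝ) * ((n:ℝ)*δ) ≤ (2*(n:ℝ)*p) * ((n:ℝ)*δ) := h2
      _ ≤ (2*(n:ℝ)*p) * ((n:ℝ)*(1/(16*p*(n:ℝ)^2))) := h3
      _ = 1/8 := h4
      _ < 1 := by norm_num
  exact aux_core (by rw [hcardK, hcardι]; omega) v w hdiag hoff hη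
end

section
/- For all positive integers a and b, every equilateral set in the ℓ_∞ sum E^a ⊕_∞ E^b of Euclidean spaces E^a and E^b has cardinality at most (a+1)(b+1)+1. -/
/-- Index type of size `a*b + a + b + 2 = (a+1)*(b+1)+1`. -/
abbrev eqIdx (a b : ℕ) := (Fin a × Fin b) ⊕ (Fin a ⊕ (Fin b ⊕ Fin 2))

/-- Right vectors. -/
noncomputable def psiAux (a b : ℕ) (d : ℝ)
    (p : EuclideanSpace ℝ (Fin a) × EuclideanSpace ℝ (Fin b)) : eqIdx a b → ℝ :=
  Sum.elim (fun kl => p.1 kl.1 * p.2 kl.2)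
    (Sum.elim (fun k => p.1 k)
      (Sum.elim (fun l => p.2 l)
        (fun i => if i = 0 then 1 else d ^ 2 / 2 - ∑ l, p.2 l ^ 2)))

/-- Left vectors. -/
noncomputable def phiAux (a b : ℕ) (d : ℝ)
    (p : EuclideanSpace ℝ (Fin a) × EuclideanSpace ℝ (Fin b)) : eqIdx a b → ℝ :=
  Sum.elim (fun kl => 2 * p.1 kl.1 * p.2 kl.2)
    (Sum.elim (fun k => 2 * (d ^ 2 / 2 - ∑ l, p.2 l ^ 2) * p.1 k)
      (Sum.elim (fun l => 2 * (d ^ 2 / 2 - ∑ k, p.1 k ^ 2) * p.2 l)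
        (fun i => if i = 0 then (d ^ 2 / 2 - ∑ k, p.1 k ^ 2) * (d ^ 2 / 2 - ∑ l, p.2 l ^ 2)
          else (d ^ 2 / 2 - ∑ k, p.1 k ^ 2))))

lemma dist_sq_eq {n : ℕ} (x y : EuclideanSpace ℝ (Fin n)) :
    dist x y ^ 2 = (∑ i, x i ^ 2) - 2 * (∑ i, x i * y i) + (∑ i, y i ^ 2) := by
  rw [EuclideanSpace.dist_eq, Real.sq_sqrt (Finset.sum_nonneg fun i _ => sq_nonneg _)]
  rw [Finset.sum_congr rfl fun i _ => (by rw [Real.dist_eq, sq_abs]; ring :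
    dist (x i) (y i) ^ 2 = x i ^ 2 - 2 * (x i * y i) + y i ^ 2)]
  rw [Finset.sum_add_distrib, Finset.sum_sub_distrib, Finset.mul_sum]

lemma keyAux (a b : ℕ) (d : ℝ)
    (p q : EuclideanSpace ℝ (Fin a) × EuclideanSpace ℝ (Fin b)) :
    (∑ i, phiAux a b d p i * psiAux a b d q i) + (∑ i, phiAux a b d q i * psiAux a b d p i)
      = (d ^ 2 - dist p.1 q.1 ^ 2) * (d ^ 2 - dist p.2 q.2 ^ 2) := by
  have hfac : ∀ (x y : EuclideanSpace ℝ (Fin a)) (z w : EuclideanSpace ℝ (Fin b)),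
      ∑ kl : Fin a × Fin b, (2 * x kl.1 * z kl.2) * (y kl.1 * w kl.2)
        = 2 * ((∑ k, x k * y k) * (∑ l, z l * w l)) := by
    intro x y z w
    rw [Fintype.sum_prod_type, Finset.sum_mul_sum, Finset.mul_sum]
    exact Finset.sum_congr rfl fun k _ => by
      rw [Finset.mul_sum]; exact Finset.sum_congr rfl fun l _ => by ring
  have hconst : ∀ (c : ℝ) (x y : EuclideanSpace ℝ (Fin a)),
      ∑ k, (2 * c * x k) * (y k) = 2 * c * ∑ k, x k * y k := by
    intro c x y
    rw [Finset.mul_sum]; exact Finset.sum_congr rfl fun k _ => by ring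
  have hconst' : ∀ (c : ℝ) (x y : EuclideanSpace ℝ (Fin b)),
      ∑ l, (2 * c * x l) * (y l) = 2 * c * ∑ l, x l * y l := by
    intro c x y
    rw [Finset.mul_sum]; exact Finset.sum_congr rfl fun l _ => by ring
  have hsymm : ∀ {n : ℕ} (x y : EuclideanSpace ℝ (Fin n)),
      ∑ k, x k * y k = ∑ k, y k * x k :=
    fun x y => Finset.sum_congr rfl fun k _ => mul_comm _ _
  have h0 : ((0 : Fin 2) = 0) = True := by simp
  have h1 : ((1 : Fin 2) = 0) = False := by simp
  simp only [phiAux, psiAux, Fintype.sum_sum_type, Sum.elim_inl, Sum.elim_inr,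
    Fin.sum_univ_two, h0, h1, if_true, if_false]
  rw [hfac, hfac, hconst, hconst, hconst', hconst', dist_sq_eq, dist_sq_eq,
    hsymm q.1 p.1, hsymm q.2 p.2]
  ring


/-- Note: the product of two metric spaces in Mathlib carries the sup (ℓ_∞) distance,
so `EuclideanSpace ℝ (Fin a) × EuclideanSpace ℝ (Fin b)` is exactly the ℓ_∞ sum
`E^a ⊕_∞ E^b`: `dist x y = max (dist x.1 y.1) (dist x.2 y.2)`. -/
theorem equilateral_linfty_sum (a b : ℕ) (ha : 0 < a) (hb : 0 < b)
    (S : Finset (EuclideanSpace ℝ (Fin a) × EuclideanSpace ℝ (Fin b)))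
    (hS : ∃ d : ℝ, 0 < d ∧ ∀ x ∈ S, ∀ y ∈ S, x ≠ y → dist x y = d) :
    S.card ≤ (a + 1) * (b + 1) + 1 := by
  classical
  obtain ⟨d, hd, hSd⟩ := hS
  set ψ := psiAux a b d with hψ
  set φ := phiAux a b d with hφ
  have hli : LinearIndependent ℝ (fun p : {x // x ∈ S} => ψ (p : _)) := by
    rw [Fintype.linearIndependent_iff]
    intro g hg
    have hg' : ∀ i, ∑ p : {x // x ∈ S}, g p * ψ (p : _) i = 0 := by
      intro i
      have := congrFun hg i
      simpa [Finset.sum_apply] using this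
    -- the double sum, computed two ways
    have hT1 : ∑ p : {x // x ∈ S}, ∑ q : {x // x ∈ S},
        g p * g q * ((∑ i, φ (p : _) i * ψ (q : _) i) + (∑ i, φ (q : _) i * ψ (p : _) i))
        = 0 := by
      have inner0 : ∀ p : {x // x ∈ S},
          ∑ q : {x // x ∈ S}, g p * g q * (∑ i, φ (p : _) i * ψ (q : _) i) = 0 := by
        intro p
        calc ∑ q : {x // x ∈ S}, g p * g q * (∑ i, φ (p : _) i * ψ (q : _) i)
            = ∑ q : {x // x ∈ S}, ∑ i, g p * φ (p : _) i * (g q * ψ (q : _) i) := by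
              refine Finset.sum_congr rfl fun q _ => ?_
              rw [Finset.mul_sum]
              exact Finset.sum_congr rfl fun i _ => by ring
          _ = ∑ i, ∑ q : {x // x ∈ S}, g p * φ (p : _) i * (g q * ψ (q : _) i) :=
              Finset.sum_comm
          _ = ∑ i, g p * φ (p : _) i * ∑ q : {x // x ∈ S}, g q * ψ (q : _) i := by
              exact Finset.sum_congr rfl fun i _ => (Finset.mul_sum _ _ _).symm
          _ = 0 := Finset.sum_eq_zero fun i _ => by rw [hg' i, mul_zero]
      have split : ∑ p : {x // x ∈ S}, ∑ q : {x // x ∈ S},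
          g p * g q * ((∑ i, φ (p : _) i * ψ (q : _) i) + (∑ i, φ (q : _) i * ψ (p : _) i))
          = (∑ p : {x // x ∈ S}, ∑ q : {x // x ∈ S},
              g p * g q * (∑ i, φ (p : _) i * ψ (q : _) i))
            + ∑ p : {x // x ∈ S}, ∑ q : {x // x ∈ S},
              g p * g q * (∑ i, φ (q : _) i * ψ (p : _) i) := by
        rw [← Finset.sum_add_distrib]
        refine Finset.sum_congr rfl fun p _ => ?_
        rw [← Finset.sum_add_distrib]
        exact Finset.sum_congr rfl fun q _ => by ring
      rw [split]
      have h2 : ∑ p : {x // x ∈ S}, ∑ q : {x // x ∈ S},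
          g p * g q * (∑ i, φ (q : _) i * ψ (p : _) i) = 0 := by
        rw [Finset.sum_comm]
        rw [Finset.sum_congr rfl fun q _ => Finset.sum_congr rfl fun p _ =>
          (by ring : g p * g q * (∑ i, φ (q : _) i * ψ (p : _) i)
            = g q * g p * (∑ i, φ (q : _) i * ψ (p : _) i))]
        exact Finset.sum_eq_zero fun q _ => inner0 q
      rw [h2, Finset.sum_eq_zero fun p _ => inner0 p, add_zero]
    have hT2 : ∑ p : {x // x ∈ S}, ∑ q : {x // x ∈ S},
        g p * g q * ((∑ i, φ (p : _) i * ψ (q : _) i) + (∑ i, φ (q : _) i * ψ (p : _) i))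
        = ∑ p : {x // x ∈ S}, g p ^ 2 * d ^ 4 := by
      refine Finset.sum_congr rfl fun p _ => ?_
      have hsingle : ∑ q : {x // x ∈ S},
          g p * g q * ((∑ i, φ (p : _) i * ψ (q : _) i) + (∑ i, φ (q : _) i * ψ (p : _) i))
          = g p * g p * ((∑ i, φ (p : _) i * ψ (p : _) i) + (∑ i, φ (p : _) i * ψ (p : _) i)) := by
        refine Finset.sum_eq_single p (fun q _ hqp => ?_) (fun h => absurd (Finset.mem_univ p) h)
        -- off-diagonal terms vanish
        have hdist := hSd p.1 p.2 q.1 q.2 (fun h => hqp (Subtype.ext h).symm)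
        rw [Prod.dist_eq] at hdist
        have hzero : (d ^ 2 - dist (p.1).1 (q.1).1 ^ 2)
            * (d ^ 2 - dist (p.1).2 (q.1).2 ^ 2) = 0 := by
          rcases max_choice (dist (p.1).1 (q.1).1) (dist (p.1).2 (q.1).2) with h | h <;>
            rw [h] at hdist
          · rw [hdist]; ring
          · rw [hdist]; ring
        rw [hψ, hφ, keyAux, hzero, mul_zero]
      rw [hsingle, hψ, hφ, keyAux, dist_self, dist_self]
      ring
    have hsum : ∑ p : {x // x ∈ S}, g p ^ 2 * d ^ 4 = 0 := by rw [← hT2, hT1]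
    intro p
    have := (Finset.sum_eq_zero_iff_of_nonneg
      (fun q _ => by positivity)).1 hsum p (Finset.mem_univ p)
    have hd4 : d ^ 4 ≠ 0 := by positivity
    have h2 : g p ^ 2 = 0 := by
      rcases mul_eq_zero.1 this with h | h
      · exact h
      · exact absurd h hd4
    exact (pow_eq_zero_iff two_ne_zero).1 h2
  have hcard := hli.fintype_card_le_finrank
  rw [Module.finrank_fintype_fun_eq_card] at hcard
  simp only [Fintype.card_coe, Fintype.card_sum, Fintype.card_prod, Fintype.card_fin] at hcard
  have : (a + 1) * (b + 1) + 1 = a * b + (a + (b + 2)) := by ring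
  omega
end

section
/- For all positive integers a and b and every positive even integer p, every equilateral set in the ℓ_p sum E^a ⊕_p E^b of Euclidean spaces E^a and E^b has cardinality at most C(a + p/2, a) + C(b + p/2, b), where C(·,·) denotes the binomial coefficient. -/
/-- The ℓ_p-sum distance on the product of two Euclidean spaces:
`((dist x₁ y₁)^p + (dist x₂ y₂)^p)^(1/p)`. -/
noncomputable def lpSumDist (p : ℕ) {a b : ℕ}
    (x y : EuclideanSpace ℝ (Fin a) × EuclideanSpace ℝ (Fin b)) : ℝ :=
  (dist x.1 y.1 ^ p + dist x.2 y.2 ^ p) ^ (1 / (p : ℝ))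

open Finset


namespace EqAux

variable {n : ℕ}

def mono (α : Fin n → ℕ) (x : EuclideanSpace ℝ (Fin n)) : ℝ := ∏ i, x i ^ α i

def eφ (c : Fin 3 × Fin n) : Fin n → ℕ := ![Pi.single c.2 2, 0, Pi.single c.2 1] c.1

def eψ (c : Fin 3 × Fin n) : Fin n → ℕ := ![0, Pi.single c.2 2, Pi.single c.2 1] c.1

def κφ : Fin 3 → ℝ := ![1, 1, -2]
def κψ : Fin 3 → ℝ := ![1, 1, 1]

lemma deg_sum (c : Fin 3 × Fin n) : (∑ i, eφ c i) + (∑ i, eψ c i) = 2 := by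
  obtain ⟨j, l⟩ := c
  fin_cases j <;> simp [eφ, eψ, Finset.sum_pi_single']

lemma mono_zero (x : EuclideanSpace ℝ (Fin n)) : mono 0 x = 1 := by simp [mono]

lemma mono_single (l : Fin n) (e : ℕ) (x : EuclideanSpace ℝ (Fin n)) :
    mono (Pi.single l e) x = x l ^ e := by
  classical
  unfold mono
  rw [Finset.prod_eq_single l]
  · simp
  · intro i _ hi; simp [Pi.single_eq_of_ne hi]
  · simp

lemma sum_expand (x y : EuclideanSpace ℝ (Fin n)) :
    ∑ c : Fin 3 × Fin n, (κφ c.1 * mono (eφ c) x) * (κψ c.1 * mono (eψ c) y)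
      = ∑ l, (x l - y l) ^ 2 := by
  rw [Fintype.sum_prod_type]
  rw [Fin.sum_univ_three]
  simp only [eφ, eψ, κφ, κψ]
  norm_num
  simp only [Matrix.cons_val, one_mul, neg_mul]
  rw [← Finset.sum_add_distrib, ← Finset.sum_add_distrib]
  refine Finset.sum_congr rfl fun l _ => ?_
  simp only [mono_single, mono_zero]
  ring

lemma mono_sum {k : ℕ} (f : Fin k → (Fin n → ℕ)) (x : EuclideanSpace ℝ (Fin n)) :
    mono (∑ q, f q) x = ∏ q, mono (f q) x := by
  unfold mono
  rw [Finset.prod_comm]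
  congr 1
  ext i
  rw [Finset.sum_apply]
  exact Finset.prod_pow_eq_pow_sum _ _ _ |>.symm

lemma pow_expand (k : ℕ) (x y : EuclideanSpace ℝ (Fin n)) :
    (∑ l, (x l - y l) ^ 2) ^ k
      = ∑ f : Fin k → (Fin 3 × Fin n),
          ((∏ q, κφ (f q).1) * mono (∑ q, eφ (f q)) x)
            * ((∏ q, κψ (f q).1) * mono (∑ q, eψ (f q)) y) := by
  have h1 : (∑ l, (x l - y l) ^ 2) ^ k
      = ∏ _q : Fin k, ∑ c : Fin 3 × Fin n,
          (κφ c.1 * mono (eφ c) x) * (κψ c.1 * mono (eψ c) y) := by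
    rw [Finset.prod_const, Finset.card_univ, Fintype.card_fin, sum_expand]
  rw [h1, Finset.prod_univ_sum]
  refine Finset.sum_congr rfl fun f _ => ?_
  rw [mono_sum, mono_sum]
  rw [Finset.prod_mul_distrib, Finset.prod_mul_distrib, Finset.prod_mul_distrib]

lemma quad_zero {k : ℕ} {ι : Type*} [Fintype ι] (w : ι → ℝ)
    (v : ι → EuclideanSpace ℝ (Fin n))
    (hw : ∀ α : Fin n → ℕ, (∑ i, α i) ≤ k → ∑ x, w x * mono α (v x) = 0) :
    ∑ x, ∑ y, (w x * w y) * (∑ l, (v x l - v y l) ^ 2) ^ k = 0 := by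
  have key : ∀ x y : ι, (w x * w y) * (∑ l, (v x l - v y l) ^ 2) ^ k
      = ∑ f : Fin k → (Fin 3 × Fin n),
          ((∏ q, κφ (f q).1) * (w x * mono (∑ q, eφ (f q)) (v x)))
            * ((∏ q, κψ (f q).1) * (w y * mono (∑ q, eψ (f q)) (v y))) := by
    intro x y
    rw [pow_expand, Finset.mul_sum]
    exact Finset.sum_congr rfl fun f _ => by ring
  simp only [key]
  have swap1 : ∀ x : ι, (∑ y : ι, ∑ f : Fin k → (Fin 3 × Fin n),
      ((∏ q, κφ (f q).1) * (w x * mono (∑ q, eφ (f q)) (v x)))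
        * ((∏ q, κψ (f q).1) * (w y * mono (∑ q, eψ (f q)) (v y))))
      = ∑ f : Fin k → (Fin 3 × Fin n), ∑ y : ι,
      ((∏ q, κφ (f q).1) * (w x * mono (∑ q, eφ (f q)) (v x)))
        * ((∏ q, κψ (f q).1) * (w y * mono (∑ q, eψ (f q)) (v y))) :=
    fun x => Finset.sum_comm
  simp only [swap1]
  rw [Finset.sum_comm]
  refine Finset.sum_eq_zero fun f _ => ?_
  have hdeg : (∑ i, (∑ q, eφ (f q)) i) + (∑ i, (∑ q, eψ (f q)) i) = 2 * k := by
    simp only [Finset.sum_apply]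
    rw [Finset.sum_comm, Finset.sum_comm (s := (univ : Finset (Fin n)))]
    rw [← Finset.sum_add_distrib]
    have : ∀ q : Fin k, ((∑ i, eφ (f q) i) + (∑ i, eψ (f q) i)) = 2 := fun q => deg_sum (f q)
    rw [Finset.sum_congr rfl fun q _ => this q]
    simp [mul_comm]
  rw [← Finset.sum_mul_sum, ← Finset.mul_sum, ← Finset.mul_sum]
  rcases le_or_gt (∑ i, (∑ q, eφ (f q)) i) k with h | h
  · rw [hw _ h, mul_zero, zero_mul]
  · have h2 : (∑ i, (∑ q, eψ (f q)) i) ≤ k := by omega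
    rw [hw _ h2, mul_zero, mul_zero]

def degSet (n k : ℕ) : Finset (Fin n → ℕ) :=
  (Fintype.piFinset fun _ : Fin n => Finset.range (k+1)).filter (fun α => ∑ i, α i ≤ k)

lemma mem_degSet {n k : ℕ} (α : Fin n → ℕ) : α ∈ degSet n k ↔ ∑ i, α i ≤ k := by
  constructor
  · intro h; exact (Finset.mem_filter.mp h).2
  · intro h
    refine Finset.mem_filter.mpr ⟨Fintype.mem_piFinset.mpr fun i => ?_, h⟩
    refine Finset.mem_range.mpr (Nat.lt_succ_of_le (le_trans ?_ h))
    exact Finset.single_le_sum (f := fun i => α i) (fun _ _ => Nat.zero_le _) (Finset.mem_univ i)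

lemma card_degSet (n k : ℕ) : (degSet n k).card = (n + k).choose n := by
  classical
  rw [← Fintype.card_coe]
  have e1 : {α // α ∈ degSet n k} ≃ {α : Fin n → ℕ // ∑ i, α i ≤ k} :=
    Equiv.subtypeEquivRight fun α => mem_degSet α
  have e2 : {α : Fin n → ℕ // ∑ i, α i ≤ k} ≃ {β : Fin (n+1) → ℕ // ∑ i, β i = k} := by
    refine ⟨fun a => ⟨Fin.snoc a.1 (k - ∑ i, a.1 i), ?_⟩,
           fun b => ⟨Fin.init b.1, ?_⟩, ?_, ?_⟩
    · rw [Fin.sum_univ_castSucc]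
      simp only [Fin.snoc_castSucc, Fin.snoc_last]
      have := a.2
      omega
    · have hb := b.2
      rw [Fin.sum_univ_castSucc] at hb
      simp only [Fin.init]
      omega
    · intro a
      refine Subtype.ext ?_
      simp only [Fin.init_snoc]
    · intro b
      refine Subtype.ext ?_
      have hb := b.2
      rw [Fin.sum_univ_castSucc] at hb
      have hval : k - (∑ i : Fin n, Fin.init b.1 i) = b.1 (Fin.last n) := by
        simp only [Fin.init]
        omega
      show Fin.snoc (Fin.init b.1) (k - ∑ i : Fin n, Fin.init b.1 i) = b.1
      rw [hval]
      exact Fin.snoc_init_self b.1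
  have e3 : {β : Fin (n+1) → ℕ // ∑ i, β i = k} ≃ {f : Fin (n+1) →₀ ℕ // f.sum (fun _ e => e) = k} := by
    refine (Finsupp.equivFunOnFinite (α := Fin (n+1)) (M := ℕ)).symm.subtypeEquiv fun β => ?_
    rw [Finsupp.sum_fintype _ _ (fun _ => rfl)]
    simp [Finsupp.equivFunOnFinite]
  have e4 : {f : Fin (n+1) →₀ ℕ // f.sum (fun _ e => e) = k} ≃ Sym (Fin (n+1)) k := by
    refine (Multiset.toFinsupp (α := Fin (n+1))).toEquiv.symm.subtypeEquiv fun f => ?_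
    rw [show ((Multiset.toFinsupp (α := Fin (n+1))).toEquiv.symm f) = Finsupp.toMultiset f from rfl]
    rw [Finsupp.card_toMultiset]
    rfl
  rw [Fintype.card_congr (((e1.trans e2).trans e3).trans e4)]
  rw [Sym.card_sym_eq_choose]
  simp only [Fintype.card_fin]
  rw [show n + 1 + k - 1 = k + n by omega, Nat.choose_symm_add, Nat.add_comm k n]


lemma rpow_eq_d {p : ℕ} (hp : 0 < p) {A d : ℝ} (hA : 0 ≤ A) (hd : 0 < d)
    (h : A ^ (1 / (p : ℝ)) = d) : A = d ^ p := by
  have hp' : (p : ℝ) ≠ 0 := Nat.cast_ne_zero.mpr hp.ne'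
  have h1 : A ^ ((1 / (p : ℝ)) * p) = (A ^ (1 / (p : ℝ))) ^ (p : ℝ) :=
    Real.rpow_mul hA _ _
  rw [one_div_mul_cancel hp', Real.rpow_one, h] at h1
  rw [h1, Real.rpow_natCast]

lemma dist_pow_two_mul {n : ℕ} (k : ℕ) (x y : EuclideanSpace ℝ (Fin n)) :
    dist x y ^ (2 * k) = (∑ l, (x l - y l) ^ 2) ^ k := by
  have h2 : dist x y ^ 2 = ∑ l, (x l - y l) ^ 2 := by
    rw [EuclideanSpace.dist_eq, Real.sq_sqrt]
    · refine Finset.sum_congr rfl fun l _ => ?_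
      rw [Real.dist_eq, sq_abs]
    · exact Finset.sum_nonneg fun l _ => sq_nonneg _
  rw [pow_mul, h2]

end EqAux

open EqAux in
theorem equilateral_lp_sum_even (a b p : ℕ) (ha : 0 < a) (hb : 0 < b)
    (hp : 0 < p) (hpe : Even p)
    (S : Finset (EuclideanSpace ℝ (Fin a) × EuclideanSpace ℝ (Fin b)))
    (hS : ∃ d : ℝ, 0 < d ∧ ∀ x ∈ S, ∀ y ∈ S, x ≠ y → lpSumDist p x y = d) :
    S.card ≤ Nat.choose (a + p / 2) a + Nat.choose (b + p / 2) b := by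
  classical
  obtain ⟨d, hd, hSd⟩ := hS
  obtain ⟨m, hm⟩ := hpe
  set k : ℕ := p / 2 with hkdef
  have hp2 : p = 2 * k := by omega
  have hk : 0 < k := by omega
  set c : ℝ := d ^ p with hcdef
  have hc : 0 < c := pow_pos hd p
  set Sa := degSet a k
  set Sb := degSet b k
  -- the moment linear map
  let T : (↥S → ℝ) →ₗ[ℝ] ((↥Sa → ℝ) × (↥Sb → ℝ)) :=
    { toFun := fun w =>
        (fun α => ∑ x : ↥S, w x * mono α.1 (x.1.1),
         fun β => ∑ x : ↥S, w x * mono β.1 (x.1.2)),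
      map_add' := by
        intro w₁ w₂
        refine Prod.ext ?_ ?_ <;> funext γ <;>
          simp [add_mul, Finset.sum_add_distrib]
      map_smul' := by
        intro r w
        refine Prod.ext ?_ ?_ <;> funext γ <;>
          simp [Finset.mul_sum, mul_assoc] }
  have hT0 : ∀ w : ↥S → ℝ, T w = 0 → w = 0 := by
    intro w hw
    have hm1 : ∀ α : Fin a → ℕ, (∑ i, α i) ≤ k →
        ∑ x : ↥S, w x * mono α (x.1.1) = 0 := by
      intro α hα
      have := congrFun (congrArg Prod.fst hw) ⟨α, (mem_degSet α).mpr hα⟩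
      simpa [T] using this
    have hm2 : ∀ β : Fin b → ℕ, (∑ i, β i) ≤ k →
        ∑ x : ↥S, w x * mono β (x.1.2) = 0 := by
      intro β hβ
      have := congrFun (congrArg Prod.snd hw) ⟨β, (mem_degSet β).mpr hβ⟩
      simpa [T] using this
    -- the equilateral relation
    have hdist : ∀ x y : ↥S, x ≠ y →
        (∑ l, (x.1.1 l - y.1.1 l) ^ 2) ^ k + (∑ l, (x.1.2 l - y.1.2 l) ^ 2) ^ k = c := by
      intro x y hxy
      have hxy' : (x : EuclideanSpace ℝ (Fin a) × EuclideanSpace ℝ (Fin b)) ≠ y :=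
        fun h => hxy (Subtype.ext h)
      have hls := hSd x.1 x.2 y.1 y.2 hxy'
      unfold lpSumDist at hls
      have hA : (0:ℝ) ≤ dist (x.1).1 (y.1).1 ^ p + dist (x.1).2 (y.1).2 ^ p :=
        add_nonneg (pow_nonneg dist_nonneg p) (pow_nonneg dist_nonneg p)
      have := rpow_eq_d hp hA hd hls
      rw [hp2] at this
      rw [← dist_pow_two_mul k x.1.1 y.1.1, ← dist_pow_two_mul k x.1.2 y.1.2]
      rw [this, ← hp2]
    -- the diagonal identity
    have expand : ∀ x y : ↥S, (if x = y then c else 0)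
        = c - (∑ l, (x.1.1 l - y.1.1 l) ^ 2) ^ k - (∑ l, (x.1.2 l - y.1.2 l) ^ 2) ^ k := by
      intro x y
      by_cases hxy : x = y
      · subst hxy
        simp [zero_pow hk.ne']
      · rw [if_neg hxy]
        have := hdist x y hxy
        linarith
    have main : ∑ x : ↥S, ∑ y : ↥S, (w x * w y) * (if x = y then c else 0) = 0 := by
      have hsumw : ∑ x : ↥S, w x = 0 := by
        have := hm1 0 (by simp)
        simpa [mono_zero] using this
      have hq1 : ∑ x : ↥S, ∑ y : ↥S, (w x * w y) * (∑ l, (x.1.1 l - y.1.1 l) ^ 2) ^ k = 0 :=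
        quad_zero w (fun x => x.1.1) hm1
      have hq2 : ∑ x : ↥S, ∑ y : ↥S, (w x * w y) * (∑ l, (x.1.2 l - y.1.2 l) ^ 2) ^ k = 0 :=
        quad_zero w (fun x => x.1.2) hm2
      calc ∑ x : ↥S, ∑ y : ↥S, (w x * w y) * (if x = y then c else 0)
          = ∑ x : ↥S, ∑ y : ↥S, ((w x * w y) * c
              - (w x * w y) * (∑ l, (x.1.1 l - y.1.1 l) ^ 2) ^ k
              - (w x * w y) * (∑ l, (x.1.2 l - y.1.2 l) ^ 2) ^ k) := by
            refine Finset.sum_congr rfl fun x _ => Finset.sum_congr rfl fun y _ => ?_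
            rw [expand x y]; ring
        _ = (∑ x : ↥S, ∑ y : ↥S, (w x * w y) * c)
              - (∑ x : ↥S, ∑ y : ↥S, (w x * w y) * (∑ l, (x.1.1 l - y.1.1 l) ^ 2) ^ k)
              - (∑ x : ↥S, ∑ y : ↥S, (w x * w y) * (∑ l, (x.1.2 l - y.1.2 l) ^ 2) ^ k) := by
            simp [Finset.sum_sub_distrib]
        _ = 0 := by
            rw [hq1, hq2]
            have : ∑ x : ↥S, ∑ y : ↥S, (w x * w y) * c
                = (∑ x : ↥S, w x) * (∑ y : ↥S, w y) * c := by
              rw [Finset.sum_mul_sum, Finset.sum_mul]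
              refine Finset.sum_congr rfl fun x _ => ?_
              rw [Finset.sum_mul]
            rw [this, hsumw]
            ring
    have diag : ∑ x : ↥S, ∑ y : ↥S, (w x * w y) * (if x = y then c else 0)
        = ∑ x : ↥S, (w x) ^ 2 * c := by
      refine Finset.sum_congr rfl fun x _ => ?_
      rw [Finset.sum_eq_single x]
      · simp [sq]
      · intro y _ hyx
        rw [if_neg (Ne.symm hyx), mul_zero]
      · intro hx
        exact absurd (Finset.mem_univ x) hx
    rw [diag] at main
    have hsq : ∑ x : ↥S, (w x) ^ 2 = 0 := by
      have : (∑ x : ↥S, (w x) ^ 2) * c = 0 := by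
        rw [← main, Finset.sum_mul]
      exact (mul_eq_zero.mp this).resolve_right hc.ne'
    funext x
    have h0 := (Finset.sum_eq_zero_iff_of_nonneg (fun x _ => sq_nonneg (w x))).mp hsq x
      (Finset.mem_univ x)
    exact (pow_eq_zero_iff (two_ne_zero)).mp h0
  have hinj : Function.Injective T := by
    intro w₁ w₂ h
    have h0 := hT0 (w₁ - w₂) (by rw [map_sub, h, sub_self])
    exact sub_eq_zero.mp h0
  have hle := LinearMap.finrank_le_finrank_of_injective hinj
  rw [Module.finrank_pi, Module.finrank_prod, Module.finrank_pi, Module.finrank_pi] at hle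
  rw [Fintype.card_coe, Fintype.card_coe, Fintype.card_coe] at hle
  rw [card_degSet, card_degSet] at hle
  exact hle
end

section
/- For positive integers a_1, …, a_n and every positive even integer p, every equilateral set in the ℓ_p sum E^{a_1} ⊕_p ⋯ ⊕_p E^{a_n} of Euclidean spaces has cardinality at most Σ_{i=1}^n C(a_i + p/2, a_i), where C(·,·) denotes the binomial coefficient. -/
/-- The ℓ_p-sum distance on the product of `n` Euclidean spaces:
`(∑ i, (dist (x i) (y i))^p)^(1/p)`. -/
noncomputable def lpSumDistN (p : ℕ) {n : ℕ} {a : Fin n → ℕ}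
    (x y : (i : Fin n) → EuclideanSpace ℝ (Fin (a i))) : ℝ :=
  (∑ i, dist (x i) (y i) ^ p) ^ (1 / (p : ℝ))

open Finset

private lemma prod_neg_eq {β : Type*} (W : Finset β) (f : β → ℝ) :
    ∏ s ∈ W, -f s = (-1) ^ W.card * ∏ s ∈ W, f s := by
  rw [← Finset.prod_const, ← Finset.prod_mul_distrib]
  simp

private lemma block_zero {ι : Type*} [Fintype ι] {m t : ℕ} (c : ι → ℝ) (u : ι → Fin m → ℝ)
    (H : ∀ M : Multiset (Fin m), M.card ≤ t → ∑ x, c x * (M.map (u x)).prod = 0) :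
    ∑ x, ∑ y, c x * c y * (∑ j, (u x j - u y j) ^ 2) ^ t = 0 := by
  classical
  have expand : ∀ x y : ι, (∑ j, (u x j - u y j) ^ 2) ^ t
      = ∑ g ∈ Fintype.piFinset (fun _ : Fin t => (univ : Finset (Fin m))),
          ∏ s, (u x (g s) - u y (g s)) ^ 2 :=
    fun x y => Finset.sum_pow' univ _ t
  simp only [expand, Fintype.piFinset_univ, Finset.mul_sum]
  have swap1 : ∀ x : ι,
      ∑ y : ι, ∑ g : Fin t → Fin m, c x * c y * ∏ s, (u x (g s) - u y (g s)) ^ 2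
      = ∑ g : Fin t → Fin m, ∑ y : ι, c x * c y * ∏ s, (u x (g s) - u y (g s)) ^ 2 :=
    fun x => Finset.sum_comm
  simp only [swap1]
  rw [Finset.sum_comm]
  refine Finset.sum_eq_zero fun g _ => ?_
  -- expand the product of squared differences over subsets
  have step1 : ∀ x y : ι, c x * c y * ∏ s, (u x (g s) - u y (g s)) ^ 2
      = ∑ T ∈ (univ : Finset (Fin t)).powerset, ∑ U ∈ (univ : Finset (Fin t)).powerset,
          (c x * ((∏ s ∈ T, u x (g s)) * ∏ s ∈ U, u x (g s))) *
          (c y * ((∏ s ∈ univ \ T, -u y (g s)) * ∏ s ∈ univ \ U, -u y (g s))) := by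
    intro x y
    have h1 : ∏ s, (u x (g s) - u y (g s)) ^ 2 = (∏ s, (u x (g s) - u y (g s))) ^ 2 :=
      Finset.prod_pow _ _ _
    have h2 : ∏ s, (u x (g s) - u y (g s))
        = ∑ T ∈ (univ : Finset (Fin t)).powerset,
            (∏ s ∈ T, u x (g s)) * ∏ s ∈ univ \ T, -u y (g s) := by
      simpa [sub_eq_add_neg] using Finset.prod_add (fun s => u x (g s)) (fun s => -u y (g s)) univ
    rw [h1, h2, sq, Finset.sum_mul_sum, Finset.mul_sum]
    refine Finset.sum_congr rfl fun T _ => ?_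
    rw [Finset.mul_sum]
    refine Finset.sum_congr rfl fun U _ => ?_
    ring
  simp only [step1]
  have sw2 : ∀ x : ι, ∀ T : Finset (Fin t),
      ∑ y : ι, ∑ U ∈ (univ : Finset (Fin t)).powerset,
        (c x * ((∏ s ∈ T, u x (g s)) * ∏ s ∈ U, u x (g s))) *
          (c y * ((∏ s ∈ univ \ T, -u y (g s)) * ∏ s ∈ univ \ U, -u y (g s)))
      = ∑ U ∈ (univ : Finset (Fin t)).powerset, ∑ y : ι,
        (c x * ((∏ s ∈ T, u x (g s)) * ∏ s ∈ U, u x (g s))) *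
          (c y * ((∏ s ∈ univ \ T, -u y (g s)) * ∏ s ∈ univ \ U, -u y (g s))) :=
    fun x T => Finset.sum_comm
  have sw1 : ∀ x : ι,
      ∑ y : ι, ∑ T ∈ (univ : Finset (Fin t)).powerset, ∑ U ∈ (univ : Finset (Fin t)).powerset,
        (c x * ((∏ s ∈ T, u x (g s)) * ∏ s ∈ U, u x (g s))) *
          (c y * ((∏ s ∈ univ \ T, -u y (g s)) * ∏ s ∈ univ \ U, -u y (g s)))
      = ∑ T ∈ (univ : Finset (Fin t)).powerset, ∑ U ∈ (univ : Finset (Fin t)).powerset, ∑ y : ι,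
        (c x * ((∏ s ∈ T, u x (g s)) * ∏ s ∈ U, u x (g s))) *
          (c y * ((∏ s ∈ univ \ T, -u y (g s)) * ∏ s ∈ univ \ U, -u y (g s))) := by
    intro x
    rw [Finset.sum_comm]
    exact Finset.sum_congr rfl fun T _ => sw2 x T
  simp only [sw1]
  rw [Finset.sum_comm]
  refine Finset.sum_eq_zero fun T hT => ?_
  have sw3 :
      ∑ x : ι, ∑ U ∈ (univ : Finset (Fin t)).powerset, ∑ y : ι,
        (c x * ((∏ s ∈ T, u x (g s)) * ∏ s ∈ U, u x (g s))) *
          (c y * ((∏ s ∈ univ \ T, -u y (g s)) * ∏ s ∈ univ \ U, -u y (g s)))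
      = ∑ U ∈ (univ : Finset (Fin t)).powerset, ∑ x : ι, ∑ y : ι,
        (c x * ((∏ s ∈ T, u x (g s)) * ∏ s ∈ U, u x (g s))) *
          (c y * ((∏ s ∈ univ \ T, -u y (g s)) * ∏ s ∈ univ \ U, -u y (g s))) :=
    Finset.sum_comm
  rw [sw3]
  refine Finset.sum_eq_zero fun U hU => ?_
  rw [← Finset.sum_mul_sum]
  -- now a product of an x-sum and a y-sum
  have hTc : T.card ≤ t := by simpa using Finset.card_le_univ T
  have hUc : U.card ≤ t := by simpa using Finset.card_le_univ U
  have prodmul : ∀ (x : ι) (A B : Finset (Fin t)),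
      (∏ s ∈ A, u x (g s)) * ∏ s ∈ B, u x (g s)
        = (((A.val + B.val).map g).map (u x)).prod := by
    intro x A B
    rw [Multiset.map_add, Multiset.map_add, Multiset.prod_add, Multiset.map_map,
      Multiset.map_map]
    rw [Finset.prod_eq_multiset_prod, Finset.prod_eq_multiset_prod]
    rfl
  rcases le_or_gt (T.card + U.card) t with hk | hk
  · have hx0 : ∑ x : ι, c x * ((∏ s ∈ T, u x (g s)) * ∏ s ∈ U, u x (g s)) = 0 := by
      have h := H ((T.val + U.val).map g) (by simpa using hk)
      rw [show (∑ x : ι, c x * ((∏ s ∈ T, u x (g s)) * ∏ s ∈ U, u x (g s)))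
          = ∑ x : ι, c x * (((T.val + U.val).map g).map (u x)).prod from
        Finset.sum_congr rfl fun x _ => by rw [prodmul]]
      exact h
    rw [hx0, zero_mul]
  · have hcards : (univ \ T).card + (univ \ U).card ≤ t := by
      rw [Finset.card_sdiff_of_subset (Finset.subset_univ T), Finset.card_sdiff_of_subset (Finset.subset_univ U)]
      simp only [Finset.card_univ, Fintype.card_fin]
      omega
    have hy0 : ∑ y : ι,
        c y * ((∏ s ∈ univ \ T, -u y (g s)) * ∏ s ∈ univ \ U, -u y (g s)) = 0 := by
      have hm := H (((univ \ T).val + (univ \ U).val).map g) (by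
        simp only [Multiset.card_map, Multiset.card_add, ← Finset.card_def,
          Finset.card_sdiff_of_subset (Finset.subset_univ _), Finset.card_univ, Fintype.card_fin]
        omega)
      calc ∑ y : ι, c y * ((∏ s ∈ univ \ T, -u y (g s)) * ∏ s ∈ univ \ U, -u y (g s))
          = ∑ y : ι, ((-1) ^ (univ \ T).card * (-1) ^ (univ \ U).card) *
              (c y * ((((univ \ T).val + (univ \ U).val).map g).map (u y)).prod) := by
            refine Finset.sum_congr rfl fun y _ => ?_
            rw [prod_neg_eq, prod_neg_eq, ← prodmul y]
            ring
        _ = ((-1) ^ (univ \ T).card * (-1) ^ (univ \ U).card) *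
              ∑ y : ι, c y * (((((univ \ T).val + (univ \ U).val)).map g).map (u y)).prod := by
            rw [Finset.mul_sum]
        _ = 0 := by rw [hm, mul_zero]
    rw [hy0, mul_zero]


theorem equilateral_lp_sum_n_even (n : ℕ) (hn : 0 < n) (a : Fin n → ℕ)
    (ha : ∀ i, 0 < a i) (p : ℕ) (hp : 0 < p) (hpe : Even p)
    (S : Finset ((i : Fin n) → EuclideanSpace ℝ (Fin (a i))))
    (hS : ∃ d : ℝ, 0 < d ∧ ∀ x ∈ S, ∀ y ∈ S, x ≠ y → lpSumDistN p x y = d) :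
    S.card ≤ ∑ i, Nat.choose (a i + p / 2) (a i) := by
  classical
  obtain ⟨d, hd, heq⟩ := hS
  obtain ⟨t, ht⟩ := hpe
  have hpt : p = 2 * t := by omega
  have ht0 : 0 < t := by omega
  have hdist : ∀ (x y : (i : Fin n) → EuclideanSpace ℝ (Fin (a i))) (i : Fin n),
      dist (x i) (y i) ^ p = (∑ j, (x i j - y i j) ^ 2) ^ t := by
    intro x y i
    rw [EuclideanSpace.dist_eq, hpt, pow_mul, sq, Real.mul_self_sqrt (by positivity)]
    congr 1
    exact Finset.sum_congr rfl fun j _ => by rw [Real.dist_eq, sq_abs]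
  have heq' : ∀ x ∈ S, ∀ y ∈ S, x ≠ y → ∑ i, dist (x i) (y i) ^ p = d ^ p := by
    intro x hx y hy hxy
    have h1 := heq x hx y hy hxy
    unfold lpSumDistN at h1
    have hA : (0:ℝ) ≤ ∑ i, dist (x i) (y i) ^ p := by positivity
    calc ∑ i, dist (x i) (y i) ^ p
        = ((∑ i, dist (x i) (y i) ^ p) ^ (1 / (p:ℝ))) ^ p := by
          rw [one_div, Real.rpow_inv_natCast_pow hA (by omega)]
      _ = d ^ p := by rw [h1]
  -- the monomial vectors
  let v : {x // x ∈ S} → ((Σ i : Fin n, Sym (Fin (a i + 1)) t) → ℝ) := fun x q =>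
    ((q.2 : Multiset (Fin (a q.1 + 1))).map (Fin.snoc (x.1 q.1) 1)).prod
  have hli : LinearIndependent ℝ v := by
    rw [Fintype.linearIndependent_iff]
    intro c hc
    have H0 : ∀ (i : Fin n) (s : Sym (Fin (a i + 1)) t),
        ∑ x : {x // x ∈ S}, c x * ((s : Multiset (Fin (a i + 1))).map (Fin.snoc (x.1 i) 1)).prod
          = 0 := by
      intro i s
      have h := congrFun hc ⟨i, s⟩
      simpa [v, Finset.sum_apply] using h
    have H : ∀ (i : Fin n) (M : Multiset (Fin (a i))), M.card ≤ t →
        ∑ x : {x // x ∈ S}, c x * (M.map (x.1 i : Fin (a i) → ℝ)).prod = 0 := by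
      intro i M hM
      have hcard : (M.map Fin.castSucc
          + Multiset.replicate (t - M.card) (Fin.last (a i))).card = t := by
        simp only [Multiset.card_add, Multiset.card_map, Multiset.card_replicate]
        omega
      have h := H0 i ⟨M.map Fin.castSucc + Multiset.replicate (t - M.card) (Fin.last (a i)), hcard⟩
      have hprod : ∀ x : {x // x ∈ S},
          ((M.map Fin.castSucc + Multiset.replicate (t - M.card) (Fin.last (a i))).map
            (Fin.snoc (x.1 i : Fin (a i) → ℝ) 1)).prod
          = (M.map (x.1 i : Fin (a i) → ℝ)).prod := by
        intro x
        rw [Multiset.map_add, Multiset.prod_add, Multiset.map_map, Multiset.map_replicate]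
        simp [Fin.snoc_castSucc, Fin.snoc_last, Function.comp]
      rw [show (∑ x : {x // x ∈ S}, c x * (M.map (x.1 i : Fin (a i) → ℝ)).prod)
          = ∑ x : {x // x ∈ S}, c x *
            ((M.map Fin.castSucc + Multiset.replicate (t - M.card) (Fin.last (a i))).map
              (Fin.snoc (x.1 i : Fin (a i) → ℝ) 1)).prod from
        Finset.sum_congr rfl fun x _ => by rw [hprod]]
      exact h
    have key : ∀ i : Fin n,
        ∑ x : {x // x ∈ S}, ∑ y : {x // x ∈ S},
          c x * c y * (∑ j, ((x.1 i : Fin (a i) → ℝ) j - (y.1 i : Fin (a i) → ℝ) j) ^ 2) ^ t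
            = 0 :=
      fun i => block_zero c (fun x => (x.1 i : Fin (a i) → ℝ)) (H i)
    have hsum0 : ∑ x : {x // x ∈ S}, c x = 0 := by
      have h := H ⟨0, hn⟩ 0 (by simp)
      simpa using h
    have QA : ∑ x : {x // x ∈ S}, ∑ y : {x // x ∈ S},
        c x * c y * (∑ i, dist (x.1 i) (y.1 i) ^ p) = 0 := by
      have e1 : ∀ x y : {x // x ∈ S},
          c x * c y * (∑ i, dist (x.1 i) (y.1 i) ^ p)
          = ∑ i, c x * c y *
              (∑ j, ((x.1 i : Fin (a i) → ℝ) j - (y.1 i : Fin (a i) → ℝ) j) ^ 2) ^ t := by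
        intro x y
        rw [Finset.mul_sum]
        exact Finset.sum_congr rfl fun i _ => by rw [hdist x.1 y.1 i]
      simp only [e1]
      have sw : ∀ x : {x // x ∈ S},
          ∑ y : {x // x ∈ S}, ∑ i, c x * c y *
              (∑ j, ((x.1 i : Fin (a i) → ℝ) j - (y.1 i : Fin (a i) → ℝ) j) ^ 2) ^ t
          = ∑ i, ∑ y : {x // x ∈ S}, c x * c y *
              (∑ j, ((x.1 i : Fin (a i) → ℝ) j - (y.1 i : Fin (a i) → ℝ) j) ^ 2) ^ t :=
        fun x => Finset.sum_comm
      simp only [sw]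
      rw [Finset.sum_comm]
      exact Finset.sum_eq_zero fun i _ => key i
    have QB : ∑ x : {x // x ∈ S}, ∑ y : {x // x ∈ S},
        c x * c y * (∑ i, dist (x.1 i) (y.1 i) ^ p)
        = - (d ^ p * ∑ x : {x // x ∈ S}, c x ^ 2) := by
      have hpt' : ∀ x y : {x // x ∈ S},
          (∑ i, dist (x.1 i) (y.1 i) ^ p) = if x = y then 0 else d ^ p := by
        intro x y
        by_cases h : x = y
        · subst h
          simp [dist_self, zero_pow (by omega : p ≠ 0)]
        · rw [if_neg h]
          exact heq' x.1 x.2 y.1 y.2 (fun hh => h (Subtype.ext hh))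
      simp only [hpt']
      have inner : ∀ x : {x // x ∈ S},
          ∑ y : {x // x ∈ S}, c x * c y * (if x = y then 0 else d ^ p)
          = c x * (∑ y : {x // x ∈ S}, c y) * d ^ p - c x * c x * d ^ p := by
        intro x
        have e2 : ∀ y : {x // x ∈ S}, c x * c y * (if x = y then 0 else d ^ p)
            = c x * c y * d ^ p - (if y = x then c x * c y * d ^ p else 0) := by
          intro y
          by_cases h : x = y
          · subst h; simp
          · rw [if_neg h, if_neg (fun hh : y = x => h hh.symm), sub_zero]
        simp only [e2]
        rw [Finset.sum_sub_distrib, Finset.sum_ite_eq' Finset.univ x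
          (fun y => c x * c y * d ^ p)]
        simp [Finset.mul_sum, Finset.sum_mul]
      simp only [inner, hsum0]
      rw [Finset.sum_sub_distrib]
      simp [Finset.sum_mul, sq, mul_comm, mul_assoc, Finset.mul_sum]
    rw [QB] at QA
    have hsq : ∑ x : {x // x ∈ S}, c x ^ 2 = 0 := by
      have hdp : (0:ℝ) < d ^ p := pow_pos hd p
      have := neg_eq_zero.mp QA
      rcases mul_eq_zero.mp this with h | h
      · exact absurd h (ne_of_gt hdp)
      · exact h
    intro x
    have h := (Finset.sum_eq_zero_iff_of_nonneg
      (fun x _ => sq_nonneg (c x))).mp hsq x (Finset.mem_univ x)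
    exact pow_eq_zero_iff (two_ne_zero) |>.mp h
  have hcard := hli.fintype_card_le_finrank
  rw [Module.finrank_fintype_fun_eq_card, Fintype.card_coe] at hcard
  refine hcard.trans (le_of_eq ?_)
  rw [Fintype.card_sigma]
  refine Finset.sum_congr rfl fun i _ => ?_
  rw [Sym.card_sym_eq_choose]
  have h2 : p / 2 = t := by omega
  rw [Fintype.card_fin, h2]
  have : a i + 1 + t - 1 = a i + t := by omega
  rw [this, Nat.add_comm (a i) t, Nat.choose_symm_add]
end

section
/- (Rank Lemma) For every real symmetric n×n nonzero matrix A = (a_{ij}), the rank of A satisfies rank A ≥ (Σ_{i=1}^n a_{ii})² / (Σ_{i,j=1}^n a_{ij}²). -/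
theorem rank_lemma (n : ℕ) (A : Matrix (Fin n) (Fin n) ℝ)
    (hsym : A.IsSymm) (hA : A ≠ 0) :
    (∑ i, A i i) ^ 2 / (∑ i, ∑ j, A i j ^ 2) ≤ (A.rank : ℝ) := by
  have hH : A.IsHermitian := by
    rwa [Matrix.IsHermitian, Matrix.conjTranspose_eq_transpose_of_trivial]
  set μ := hH.eigenvalues with hμ
  set U : Matrix (Fin n) (Fin n) ℝ := (hH.eigenvectorUnitary : Matrix (Fin n) (Fin n) ℝ) with hU
  have hUU : star U * U = 1 := Matrix.mem_unitaryGroup_iff'.mp hH.eigenvectorUnitary.2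
  have hspec : A = U * Matrix.diagonal μ * star U := by
    simpa using hH.spectral_theorem
  -- trace = sum of eigenvalues
  have htr : ∑ i, A i i = ∑ i, μ i := by
    have : Matrix.trace A = Matrix.trace (Matrix.diagonal μ) := by
      conv_lhs => rw [hspec]
      rw [Matrix.trace_mul_cycle, hUU, one_mul]
    simpa [Matrix.trace, Matrix.diag] using this
  -- sum of squares = sum of eigenvalues squared
  have hsq : ∑ i, ∑ j, A i j ^ 2 = ∑ i, μ i ^ 2 := by
    have h1 : Matrix.trace (A * A) = ∑ i, μ i ^ 2 := by
      conv_lhs => rw [hspec]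
      rw [show U * Matrix.diagonal μ * star U * (U * Matrix.diagonal μ * star U)
          = U * (Matrix.diagonal μ * ((star U * U) * Matrix.diagonal μ)) * star U by
            noncomm_ring,
        hUU, one_mul, Matrix.diagonal_mul_diagonal, Matrix.trace_mul_cycle,
        hUU, one_mul]
      simp [Matrix.trace, Matrix.diag, sq]
    rw [← h1]
    simp only [Matrix.trace, Matrix.diag, Matrix.mul_apply]
    refine Finset.sum_congr rfl fun i _ => Finset.sum_congr rfl fun j _ => ?_
    have : A j i = A i j := by
      conv_lhs => rw [← hsym]
      rfl
    rw [this, sq]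
  rw [htr, hsq]
  -- positivity of denominator
  have hpos : 0 < ∑ i, μ i ^ 2 := by
    rcases hH.exists_eigenvector_of_ne_zero hA with ⟨v, t, ht, hv, hAv⟩
    have htμ : ∃ i, μ i ≠ 0 := by
      by_contra h
      push_neg at h
      apply hv
      have hdiag : Matrix.diagonal μ = 0 := by
        ext i j; by_cases hij : i = j <;> simp [Matrix.diagonal, hij, h]
      have : A = 0 := by rw [hspec, hdiag]; simp
      have h0 : t • v = 0 := by rw [← hAv, this]; simp
      exact (smul_eq_zero.mp h0).resolve_left ht
    obtain ⟨i, hi⟩ := htμ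
    exact Finset.sum_pos' (fun j _ => sq_nonneg _)
      ⟨i, Finset.mem_univ i, by positivity⟩
  rw [div_le_iff₀ hpos]
  -- rank = number of nonzero eigenvalues
  set s : Finset (Fin n) := Finset.univ.filter (fun i => μ i ≠ 0) with hs
  have hrank : (A.rank : ℝ) = (s.card : ℝ) := by
    rw [hH.rank_eq_card_non_zero_eigs]
    norm_cast
    simp [hs, Fintype.card_subtype, hμ]
  rw [hrank]
  have hsum : ∑ i, μ i = ∑ i ∈ s, μ i := (Finset.sum_filter_ne_zero _).symm
  calc (∑ i, μ i) ^ 2 = (∑ i ∈ s, μ i) ^ 2 := by rw [hsum]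
    _ ≤ s.card * ∑ i ∈ s, μ i ^ 2 := by exact_mod_cast sq_sum_le_card_mul_sum_sq (s:=s) (f:=μ)
    _ ≤ s.card * ∑ i, μ i ^ 2 := by
        have h1 : ∑ i ∈ s, μ i ^ 2 ≤ ∑ i, μ i ^ 2 :=
          Finset.sum_le_sum_of_subset_of_nonneg (Finset.filter_subset _ _)
            (fun i _ _ => sq_nonneg _)
        have h2 : (0:ℝ) ≤ s.card := Nat.cast_nonneg _
        exact mul_le_mul_of_nonneg_left h1 h2
end

section
/- Let A = (a_{ij}) be a real symmetric n×n matrix with a_{ii} = 1 for all i and |a_{ij}| ≤ ε for all i ≠ j, where ε ≥ 0. Then rank A ≥ n / (1 + (n−1)ε²). In particular, if ε = n^{−1/2} then rank A ≥ n/2. -/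
open Matrix Finset

lemma trace_eq_sum_eigs {n : ℕ} {A : Matrix (Fin n) (Fin n) ℝ} (hA : A.IsHermitian) :
    A.trace = ∑ i, hA.eigenvalues i := by
  conv_lhs => rw [hA.spectral_theorem]
  rw [Unitary.conjStarAlgAut_apply]
  rw [Matrix.trace_mul_cycle, Unitary.coe_star_mul_self, Matrix.one_mul, Matrix.trace_diagonal]
  simp

lemma trace_sq_eq_sum_sq_eigs {n : ℕ} {A : Matrix (Fin n) (Fin n) ℝ} (hA : A.IsHermitian) :
    (A * A).trace = ∑ i, hA.eigenvalues i ^ 2 := by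
  conv_lhs => rw [hA.spectral_theorem]
  rw [Unitary.conjStarAlgAut_apply]
  rw [show ∀ U D : Matrix (Fin n) (Fin n) ℝ, (U * D * star U) * (U * D * star U)
      = U * (D * (star U * U) * D) * star U from fun U D => by noncomm_ring]
  rw [Unitary.coe_star_mul_self]
  rw [Matrix.trace_mul_cycle, Unitary.coe_star_mul_self, Matrix.one_mul]
  simp [Matrix.diagonal_mul_diagonal, Matrix.trace_diagonal, sq]

lemma trace_sq_le_rank_mul {n : ℕ} {A : Matrix (Fin n) (Fin n) ℝ} (hA : A.IsHermitian) :
    A.trace ^ 2 ≤ (A.rank : ℝ) * (A * A).trace := by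
  classical
  set μ := hA.eigenvalues with hμ
  have hrank : (A.rank : ℝ) = #(univ.filter (fun i => μ i ≠ 0)) := by
    rw [hA.rank_eq_card_non_zero_eigs, Fintype.card_subtype]
  rw [trace_eq_sum_eigs hA, trace_sq_eq_sum_sq_eigs hA, hrank]
  have h1 : ∑ i, μ i = ∑ i ∈ univ.filter (fun i => μ i ≠ 0), μ i := by
    rw [Finset.sum_filter_ne_zero]
  rw [h1]
  calc (∑ i ∈ univ.filter (fun i => μ i ≠ 0), μ i) ^ 2
      ≤ #(univ.filter (fun i => μ i ≠ 0)) * ∑ i ∈ univ.filter (fun i => μ i ≠ 0), μ i ^ 2 :=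
        sq_sum_le_card_mul_sum_sq
    _ ≤ #(univ.filter (fun i => μ i ≠ 0)) * ∑ i, μ i ^ 2 := by
        have h2 := Finset.sum_le_sum_of_subset_of_nonneg
          (Finset.filter_subset (fun i => μ i ≠ 0) univ) (fun i _ _ => sq_nonneg (μ i))
        exact mul_le_mul_of_nonneg_left h2 (Nat.cast_nonneg _)

theorem rank_lemma_corollary (n : ℕ) (ε : ℝ) (hε : 0 ≤ ε)
    (A : Matrix (Fin n) (Fin n) ℝ) (hsym : A.IsSymm)
    (hdiag : ∀ i, A i i = 1) (hoff : ∀ i j, i ≠ j → |A i j| ≤ ε) :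
    (n : ℝ) / (1 + ((n : ℝ) - 1) * ε ^ 2) ≤ (A.rank : ℝ) ∧
      (ε = (n : ℝ) ^ (-(1 / 2) : ℝ) → (n : ℝ) / 2 ≤ (A.rank : ℝ)) := by
  classical
  rcases Nat.eq_zero_or_pos n with rfl | hn
  · constructor
    · simp
    · intro _; simp
  have hn1 : (1 : ℝ) ≤ (n : ℝ) := by exact_mod_cast hn
  have hA : A.IsHermitian := by
    rw [Matrix.IsHermitian, Matrix.conjTranspose_eq_transpose_of_trivial]; exact hsym
  -- denominator
  set D : ℝ := 1 + ((n : ℝ) - 1) * ε ^ 2 with hD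
  have hDpos : 0 < D := by
    have : 0 ≤ ((n : ℝ) - 1) * ε ^ 2 := mul_nonneg (by linarith) (sq_nonneg _)
    linarith
  -- trace A = n
  have htr : A.trace = (n : ℝ) := by
    simp [Matrix.trace, Matrix.diag, hdiag]
  -- trace (A*A) ≤ n * D
  have htr2 : (A * A).trace ≤ (n : ℝ) * D := by
    have hsum : ∀ i : Fin n, ∑ j, A i j * A j i ≤ D := by
      intro i
      have hsplit : ∑ j, A i j * A j i
          = A i i * A i i + ∑ j ∈ univ.filter (fun j => j ≠ i), A i j * A j i := by
        rw [← Finset.sum_filter_add_sum_filter_not univ (fun j => j = i)]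
        congr 1
        rw [Finset.filter_eq']
        simp
      rw [hsplit, hdiag]
      have hbound : ∑ j ∈ univ.filter (fun j => j ≠ i), A i j * A j i
          ≤ ((n : ℝ) - 1) * ε ^ 2 := by
        have hcard : (#(univ.filter (fun j => j ≠ i)) : ℝ) = (n : ℝ) - 1 := by
          rw [Finset.filter_ne', Finset.card_erase_of_mem (Finset.mem_univ _)]
          simp [Nat.cast_sub hn]
        calc ∑ j ∈ univ.filter (fun j => j ≠ i), A i j * A j i
            ≤ ∑ j ∈ univ.filter (fun j => j ≠ i), ε ^ 2 := by
              apply Finset.sum_le_sum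
              intro j hj
              have hji : j ≠ i := (Finset.mem_filter.mp hj).2
              have h1 : |A i j| ≤ ε := hoff i j (Ne.symm hji)
              have h2 : |A j i| ≤ ε := hoff j i hji
              calc A i j * A j i ≤ |A i j * A j i| := le_abs_self _
                _ = |A i j| * |A j i| := abs_mul _ _
                _ ≤ ε * ε := mul_le_mul h1 h2 (abs_nonneg _) hε
                _ = ε ^ 2 := (sq ε).symm
          _ = ((n : ℝ) - 1) * ε ^ 2 := by rw [Finset.sum_const, nsmul_eq_mul, hcard]
      linarith
    calc (A * A).trace = ∑ i, ∑ j, A i j * A j i := by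
          simp [Matrix.trace, Matrix.diag, Matrix.mul_apply]
      _ ≤ ∑ _i : Fin n, D := Finset.sum_le_sum fun i _ => hsum i
      _ = (n : ℝ) * D := by rw [Finset.sum_const, nsmul_eq_mul]; simp
  have hkey : ((n : ℝ)) ^ 2 ≤ (A.rank : ℝ) * ((n : ℝ) * D) := by
    have h := trace_sq_le_rank_mul hA
    rw [htr] at h
    refine h.trans ?_
    exact mul_le_mul_of_nonneg_left htr2 (Nat.cast_nonneg _)
  have hnpos : (0 : ℝ) < n := by exact_mod_cast hn
  have hmain : (n : ℝ) / D ≤ (A.rank : ℝ) := by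
    rw [div_le_iff₀ hDpos]
    have := (mul_le_mul_iff_right₀ hnpos).mp (by nlinarith : (n:ℝ) * (n:ℝ) ≤ (n:ℝ) * ((A.rank : ℝ) * D))
    linarith
  refine ⟨hmain, fun hε2 => ?_⟩
  have hε2' : ε ^ 2 = 1 / (n : ℝ) := by
    rw [hε2, ← Real.rpow_natCast ((n:ℝ) ^ (-(1/2) : ℝ)) 2, ← Real.rpow_mul (Nat.cast_nonneg n)]
    norm_num
    rw [Real.rpow_neg_one]
  have hDle : D ≤ 2 := by
    rw [hD, hε2']
    have : ((n:ℝ) - 1) * (1 / n) ≤ 1 := by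
      rw [mul_one_div, div_le_one hnpos]; linarith
    linarith
  calc (n : ℝ) / 2 ≤ (n : ℝ) / D := by
        apply div_le_div_of_nonneg_left (le_of_lt hnpos) hDpos hDle
    _ ≤ (A.rank : ℝ) := hmain
end

section
/- Let k ≥ 2 be an even integer, n a positive integer, and let p_1, …, p_m be points in ℝ^n such that for all i ≠ j, |1 − ‖p_i − p_j‖_k^k| ≤ m^{−1/2}, where ‖x‖_k = (Σ_{t=1}^n |x_t|^k)^{1/k}. Then m ≤ 2((k−1)n + 2). -/
open Finset in
private theorem expand_pow_aux (k : ℕ) (hk : 2 ≤ k) (hke : Even k) (a b : ℝ) :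
    (a - b)^k = a^k + b^k +
      ∑ s ∈ Finset.range (k-1), (k.choose (s+1):ℝ) * a^(s+1) * (-b)^(k-(s+1)) := by
  have h1 : (a - b)^k = ∑ s ∈ Finset.range (k+1), a^s * (-b)^(k-s) * (k.choose s : ℝ) := by
    rw [sub_eq_add_neg, add_pow]
  rw [h1, Finset.sum_range_succ]
  rw [show k = (k-1)+1 by omega]
  rw [Finset.sum_range_succ']
  simp only [pow_zero, one_mul, Nat.choose_zero_right, Nat.cast_one, mul_one,
    Nat.choose_self, Nat.sub_self]
  rw [show (k-1)+1 - 0 = k by omega, hke.neg_pow]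
  have h2 : ∑ x ∈ Finset.range (k-1), a^(x+1)*(-b)^(k-(x+1))*(k.choose (x+1):ℝ)
      = ∑ x ∈ Finset.range (k-1), (k.choose (x+1):ℝ)*a^(x+1)*(-b)^(k-(x+1)) := by
    apply Finset.sum_congr rfl; intros; ring
  rw [show (k-1)+1 = k by omega, h2]; ring

open Matrix Finset in
private theorem trace_eigs (m : ℕ) (A : Matrix (Fin m) (Fin m) ℝ) (hA : A.IsHermitian) :
    Matrix.trace A = ∑ i, hA.eigenvalues i ∧
    Matrix.trace (A*A) = ∑ i, (hA.eigenvalues i)^2 := by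
  set U : Matrix (Fin m) (Fin m) ℝ := (hA.eigenvectorUnitary : Matrix (Fin m) (Fin m) ℝ) with hUdef
  set D : Matrix (Fin m) (Fin m) ℝ := diagonal (RCLike.ofReal ∘ hA.eigenvalues) with hDdef
  have hU : star U * U = 1 := (Unitary.mem_iff.mp hA.eigenvectorUnitary.2).1
  have hspec : A = U * D * star U := hA.spectral_theorem
  constructor
  · conv_lhs => rw [hspec]
    rw [trace_mul_cycle, hU, one_mul, hDdef, trace_diagonal]
    simp
  · have e1 : (U * D * star U) * (U * D * star U) = U * (D * D) * star U := by
      calc (U*D*star U)*(U*D*star U) = U*D*((star U*U)*(D*star U)) := by noncomm_ring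
      _ = U*(D*D)*star U := by rw [hU, one_mul]; noncomm_ring
    conv_lhs => rw [hspec, e1]
    rw [trace_mul_cycle, hU, one_mul, hDdef, diagonal_mul_diagonal, trace_diagonal]
    simp [sq]

theorem approx_equilateral_lk (k : ℕ) (hk : 2 ≤ k) (hke : Even k)
    (n : ℕ) (hn : 0 < n) (m : ℕ) (P : Fin m → (Fin n → ℝ))
    (h : ∀ i j : Fin m, i ≠ j →
      |1 - ∑ t, |P i t - P j t| ^ k| ≤ (m : ℝ) ^ (-(1 / 2) : ℝ)) :
    m ≤ 2 * ((k - 1) * n + 2) := by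
  rcases Nat.eq_zero_or_pos m with hm | hm
  · omega
  set M : Matrix (Fin m) (Fin m) ℝ :=
    Matrix.of (fun i j => 1 - ∑ t, (P i t - P j t)^k) with hMdef
  have hMabs : ∀ i j, M i j = 1 - ∑ t, |P i t - P j t|^k := by
    intro i j
    simp only [hMdef, Matrix.of_apply, hke.pow_abs]
  have hsymm : M.IsHermitian := by
    rw [Matrix.IsHermitian]
    ext i j
    simp only [Matrix.conjTranspose_apply, hMdef, Matrix.of_apply, star_trivial]
    congr 1
    apply Finset.sum_congr rfl
    intro t _
    rw [← neg_sub, hke.neg_pow]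
  have hMsym : ∀ i j, M j i = M i j := by
    intro i j
    conv_rhs => rw [← hsymm]
    simp [Matrix.conjTranspose_apply]
  have hdiag : ∀ i, M i i = 1 := by
    intro i
    simp [hMdef, zero_pow (show k ≠ 0 by omega)]
  have hoff : ∀ i j, i ≠ j → |M i j| ≤ (m:ℝ) ^ (-(1/2) : ℝ) := by
    intro i j hij
    rw [hMabs]
    exact h i j hij
  -- factorization
  set A : Matrix (Fin m) (Unit ⊕ Unit ⊕ Fin n × Fin (k-1)) ℝ :=
    Matrix.of (fun i l => Sum.elim (fun _ => 1 - ∑ t, (P i t)^k)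
      (Sum.elim (fun _ => (-1:ℝ))
        (fun ts => -((k.choose ((ts.2:ℕ)+1):ℝ) * (P i ts.1)^((ts.2:ℕ)+1)))) l) with hAdef
  set B : Matrix (Unit ⊕ Unit ⊕ Fin n × Fin (k-1)) (Fin m) ℝ :=
    Matrix.of (fun l j => Sum.elim (fun _ => (1:ℝ))
      (Sum.elim (fun _ => ∑ t, (P j t)^k)
        (fun ts => (-(P j ts.1))^(k-((ts.2:ℕ)+1)))) l) with hBdef
  have hfact : M = A * B := by
    ext i j
    rw [Matrix.mul_apply]
    rw [Fintype.sum_sum_type, Fintype.sum_sum_type, Fintype.sum_prod_type]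
    simp only [hAdef, hBdef, Matrix.of_apply, Sum.elim_inl, Sum.elim_inr,
      Finset.univ_unique, Finset.sum_const, Finset.card_singleton, one_smul, smul_eq_mul]
    have key : ∀ t : Fin n, (P i t - P j t)^k = (P i t)^k + (P j t)^k +
        ∑ s : Fin (k-1), (k.choose ((s:ℕ)+1):ℝ) * (P i t)^((s:ℕ)+1) * (-(P j t))^(k-((s:ℕ)+1)) := by
      intro t
      rw [Fin.sum_univ_eq_sum_range (fun s => (k.choose (s+1):ℝ) * (P i t)^(s+1) * (-(P j t))^(k-(s+1)))]
      exact expand_pow_aux k hk hke _ _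
    simp only [hMdef, Matrix.of_apply]
    rw [Finset.sum_congr rfl (fun t _ => key t)]
    simp only [neg_mul, Finset.sum_neg_distrib]
    rw [Finset.sum_add_distrib, Finset.sum_add_distrib]
    ring
  have hrank : M.rank ≤ n*(k-1) + 2 := by
    rw [hfact]
    calc (A * B).rank ≤ A.rank := Matrix.rank_mul_le_left A B
    _ ≤ Fintype.card (Unit ⊕ Unit ⊕ Fin n × Fin (k-1)) := Matrix.rank_le_card_width A
    _ = n*(k-1) + 2 := by simp; ring
  have hmr : (0:ℝ) < m := by exact_mod_cast hm
  have heps : ((m:ℝ) ^ (-(1/2) : ℝ))^2 = ((m:ℝ))⁻¹ := by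
    rw [← Real.rpow_natCast ((m:ℝ) ^ (-(1/2) : ℝ)) 2, ← Real.rpow_mul hmr.le]
    norm_num
    exact Real.rpow_neg_one _
  obtain ⟨htr, htr2⟩ := trace_eigs m M hsymm
  set lam := hsymm.eigenvalues with hlam
  have h1 : ∑ i, lam i = (m:ℝ) := by
    rw [← htr, Matrix.trace]
    simp [Matrix.diag, hdiag]
  have h2 : ∑ i, (lam i)^2 ≤ 2*m := by
    rw [← htr2]
    have htrMM : Matrix.trace (M*M) = ∑ i, ∑ j, (M i j)^2 := by
      rw [Matrix.trace]
      apply Finset.sum_congr rfl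
      intro i _
      rw [Matrix.diag_apply, Matrix.mul_apply]
      apply Finset.sum_congr rfl
      intro j _
      rw [hMsym i j, sq]
    rw [htrMM]
    calc ∑ i, ∑ j, (M i j)^2 ≤ ∑ _i : Fin m, (2:ℝ) := by
          apply Finset.sum_le_sum
          intro i _
          rw [← Finset.add_sum_erase _ _ (Finset.mem_univ i), hdiag i, one_pow]
          have hin : ∑ j ∈ Finset.univ.erase i, (M i j)^2
              ≤ ∑ _j ∈ Finset.univ.erase i, ((m:ℝ))⁻¹ := by
            apply Finset.sum_le_sum
            intro j hj
            have hji : j ≠ i := Finset.ne_of_mem_erase hj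
            have := hoff i j (Ne.symm hji)
            calc (M i j)^2 = |M i j|^2 := (sq_abs _).symm
            _ ≤ ((m:ℝ) ^ (-(1/2) : ℝ))^2 := by
                apply pow_le_pow_left₀ (abs_nonneg _) this
            _ = ((m:ℝ))⁻¹ := heps
          have hcard : (Finset.univ.erase i).card ≤ m := by
            calc (Finset.univ.erase i).card ≤ (Finset.univ : Finset (Fin m)).card :=
              Finset.card_le_card (Finset.erase_subset _ _)
            _ = m := by simp
          have : ∑ _j ∈ Finset.univ.erase i, ((m:ℝ))⁻¹ ≤ 1 := by
            rw [Finset.sum_const, nsmul_eq_mul]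
            calc ((Finset.univ.erase i).card : ℝ) * ((m:ℝ))⁻¹
                ≤ (m:ℝ) * ((m:ℝ))⁻¹ := by
                  apply mul_le_mul_of_nonneg_right _ (by positivity)
                  exact_mod_cast hcard
            _ = 1 := mul_inv_cancel₀ hmr.ne'
          linarith
    _ = 2*m := by simp [Finset.sum_const]; ring
  set s : Finset (Fin m) := Finset.univ.filter (fun i => lam i ≠ 0) with hs
  have hs1 : ∑ i ∈ s, lam i = ∑ i, lam i := Finset.sum_filter_ne_zero _
  have hcs : (∑ i ∈ s, lam i * 1)^2 ≤ (∑ i ∈ s, (lam i)^2) * (∑ i ∈ s, (1:ℝ)^2) :=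
    Finset.sum_mul_sq_le_sq_mul_sq s lam 1
  have hssum : ∑ i ∈ s, (lam i)^2 ≤ 2*m := by
    refine le_trans ?_ h2
    exact Finset.sum_le_sum_of_subset_of_nonneg (Finset.filter_subset _ _)
      (fun i _ _ => sq_nonneg _)
  have hscard : s.card ≤ n*(k-1) + 2 := by
    have := hsymm.rank_eq_card_non_zero_eigs
    rw [Fintype.card_subtype] at this
    calc s.card = M.rank := by rw [this]
    _ ≤ n*(k-1) + 2 := hrank
  have hkey : (m:ℝ)^2 ≤ (2*m) * s.card := by
    calc (m:ℝ)^2 = (∑ i ∈ s, lam i * 1)^2 := by rw [← h1, ← hs1]; simp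
    _ ≤ (∑ i ∈ s, (lam i)^2) * (∑ i ∈ s, (1:ℝ)^2) := hcs
    _ = (∑ i ∈ s, (lam i)^2) * s.card := by simp
    _ ≤ (2*m) * s.card := mul_le_mul_of_nonneg_right hssum (Nat.cast_nonneg _)
  have hfin : (m:ℝ) ≤ 2 * s.card := by nlinarith
  have hfin2 : m ≤ 2 * s.card := by exact_mod_cast hfin
  calc m ≤ 2 * s.card := hfin2
  _ ≤ 2 * (n*(k-1) + 2) := by omega
  _ = 2 * ((k-1)*n + 2) := by rw [Nat.mul_comm n (k-1)]
end

section
/- Let a, b be positive integers and let S be a finite equilateral set in the ℓ_∞ sum E^a ⊕_∞ E^b with common distance 1. For each u = (ũ₁, ũ₂) ∈ S, define f_u : ℝ^a × ℝ^b → ℝ by f_u(x₁, x₂) = (1 − ‖x₁ − ũ₁‖²)(1 − ‖x₂ − ũ₂‖²), where ‖·‖ is the Euclidean norm. Then the collection of functions consisting of all f_u for u ∈ S, the constant function 1, the a+b coordinate functions (x₁,x₂) ↦ (x₁)_i (1 ≤ i ≤ a) and (x₁,x₂) ↦ (x₂)_j (1 ≤ j ≤ b), and the function (x₁,x₂) ↦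 ‖x₁‖², is linearly independent over ℝ. -/
private lemma poly9 (n00 n01 n02 n10 n11 n12 n20 n21 n22 : ℝ)
    (h : ∀ s t : ℝ, n00 + n01*t + n02*t^2 + n10*s + n11*s*t + n12*s*t^2
        + n20*s^2 + n21*s^2*t + n22*s^2*t^2 = 0) :
    n02 = 0 ∧ n12 = 0 ∧ n21 = 0 ∧ n22 = 0 := by
  have h00 := h 0 0
  have h01 := h 0 1
  have h0m := h 0 (-1)
  have h10 := h 1 0
  have h11 := h 1 1
  have h1m := h 1 (-1)
  have hm0 := h (-1) 0
  have hm1 := h (-1) 1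
  have hmm := h (-1) (-1)
  norm_num at h00 h01 h0m h10 h11 h1m hm0 hm1 hmm
  refine ⟨by linarith, by linarith, by linarith, by linarith⟩

private lemma extract {ι : Type*} (T : Finset ι) (c P p Q q : ι → ℝ) (d A B e : ℝ)
    (h : ∀ s t : ℝ,
      (∑ u ∈ T, c u * ((P u + 2*s*p u - s^2) * (Q u + 2*t*q u - t^2)))
        + d + A*s + B*t + e*s^2 = 0) :
    (∑ u ∈ T, c u = 0) ∧ (∑ u ∈ T, c u * p u = 0) ∧ (∑ u ∈ T, c u * q u = 0)
      ∧ (∑ u ∈ T, c u * P u = 0) := by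
  have expand : ∀ s t : ℝ,
      (∑ u ∈ T, c u * ((P u + 2*s*p u - s^2) * (Q u + 2*t*q u - t^2)))
      = (∑ u ∈ T, c u * P u * Q u) + (∑ u ∈ T, 2 * (c u * P u * q u)) * t
        + (-(∑ u ∈ T, c u * P u)) * t^2
        + (∑ u ∈ T, 2 * (c u * p u * Q u)) * s
        + (∑ u ∈ T, 4 * (c u * p u * q u)) * (s*t)
        + (-2 * (∑ u ∈ T, c u * p u)) * (s*t^2)
        + (-(∑ u ∈ T, c u * Q u)) * s^2
        + (-2 * (∑ u ∈ T, c u * q u)) * (s^2*t)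
        + (∑ u ∈ T, c u) * (s^2*t^2) := by
    intro s t
    simp only [Finset.sum_mul, Finset.mul_sum, neg_mul, ← Finset.sum_neg_distrib]
    rw [← Finset.sum_add_distrib, ← Finset.sum_add_distrib, ← Finset.sum_add_distrib,
      ← Finset.sum_add_distrib, ← Finset.sum_add_distrib, ← Finset.sum_add_distrib,
      ← Finset.sum_add_distrib, ← Finset.sum_add_distrib]
    exact Finset.sum_congr rfl fun u _ => by ring
  obtain ⟨h1, h2, h3, h4⟩ := poly9
    ((∑ u ∈ T, c u * P u * Q u) + d)
    ((∑ u ∈ T, 2 * (c u * P u * q u)) + B)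
    (-(∑ u ∈ T, c u * P u))
    ((∑ u ∈ T, 2 * (c u * p u * Q u)) + A)
    (∑ u ∈ T, 4 * (c u * p u * q u))
    (-2 * (∑ u ∈ T, c u * p u))
    ((-(∑ u ∈ T, c u * Q u)) + e)
    (-2 * (∑ u ∈ T, c u * q u))
    (∑ u ∈ T, c u)
    (by intro s t; have h0 := h s t; rw [expand s t] at h0; linarith)
  exact ⟨h4, by linarith, by linarith, by linarith⟩

private lemma norm_smul_single_sub {n : ℕ} (i : Fin n) (s : ℝ) (v : EuclideanSpace ℝ (Fin n)) :
    ‖s • EuclideanSpace.single i (1:ℝ) - v‖^2 = s^2 - 2*s*(v i) + ‖v‖^2 := by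
  rw [norm_sub_sq_real, norm_smul, EuclideanSpace.norm_single, real_inner_smul_left,
    EuclideanSpace.inner_single_left]
  simp [sq_abs, mul_pow]
  ring

private lemma norm_smul_single {n : ℕ} (i : Fin n) (s : ℝ) :
    ‖s • EuclideanSpace.single i (1:ℝ)‖^2 = s^2 := by
  rw [norm_smul, EuclideanSpace.norm_single]
  simp [sq_abs, mul_pow]

private lemma coordsum {n : ℕ} (A : Fin n → ℝ) (i : Fin n) (s : ℝ) :
    ∑ k, A k * ((s • EuclideanSpace.single i (1:ℝ)) k) = A i * s := by
  have : ∀ k, (s • EuclideanSpace.single i (1:ℝ)) k = s * (if k = i then 1 else 0) := by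
    intro k; simp [EuclideanSpace.single_apply]
  simp only [this, mul_ite, mul_one, mul_zero]
  simp [Finset.sum_ite_eq']

theorem linearIndependent_linfty_functions (a b : ℕ) (ha : 0 < a) (hb : 0 < b)
    (S : Finset (EuclideanSpace ℝ (Fin a) × EuclideanSpace ℝ (Fin b)))
    (hS : ∀ u ∈ S, ∀ v ∈ S, u ≠ v → dist u v = 1) :
    LinearIndependent ℝ
      (fun idx : ↥S ⊕ (Unit ⊕ (Fin a ⊕ (Fin b ⊕ Unit))) =>
        match idx with
        | Sum.inl u => fun x : EuclideanSpace ℝ (Fin a) × EuclideanSpace ℝ (Fin b) =>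
            (1 - ‖x.1 - (u : EuclideanSpace ℝ (Fin a) × EuclideanSpace ℝ (Fin b)).1‖ ^ 2) *
              (1 - ‖x.2 - (u : EuclideanSpace ℝ (Fin a) × EuclideanSpace ℝ (Fin b)).2‖ ^ 2)
        | Sum.inr (Sum.inl _) => fun _ => (1 : ℝ)
        | Sum.inr (Sum.inr (Sum.inl i)) => fun x => x.1 i
        | Sum.inr (Sum.inr (Sum.inr (Sum.inl j))) => fun x => x.2 j
        | Sum.inr (Sum.inr (Sum.inr (Sum.inr _))) => fun x => ‖x.1‖ ^ 2) := by
  rw [Fintype.linearIndependent_iff]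
  intro g hg
  set c : ↥S → ℝ := fun u => g (Sum.inl u) with hc
  set d : ℝ := g (Sum.inr (Sum.inl ())) with hd
  set A : Fin a → ℝ := fun i => g (Sum.inr (Sum.inr (Sum.inl i))) with hA
  set B : Fin b → ℝ := fun j => g (Sum.inr (Sum.inr (Sum.inr (Sum.inl j)))) with hB
  set e : ℝ := g (Sum.inr (Sum.inr (Sum.inr (Sum.inr ())))) with he
  have hx : ∀ x : EuclideanSpace ℝ (Fin a) × EuclideanSpace ℝ (Fin b),
      (∑ u : ↥S, c u * ((1 - ‖x.1 - (u:EuclideanSpace ℝ (Fin a) × EuclideanSpace ℝ (Fin b)).1‖^2)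
        * (1 - ‖x.2 - (u:EuclideanSpace ℝ (Fin a) × EuclideanSpace ℝ (Fin b)).2‖^2)))
        + d + (∑ i, A i * x.1 i) + (∑ j, B j * x.2 j) + e * ‖x.1‖^2 = 0 := by
    intro x
    have h0 := congrFun hg x
    simp only [Fintype.sum_sum_type, Finset.sum_apply, Pi.smul_apply, smul_eq_mul,
      Pi.add_apply, Pi.zero_apply, Finset.univ_unique, PUnit.default_eq_unit,
      Finset.sum_singleton] at h0
    simp only [hc, hd, hA, hB, he]
    linarith
  -- key relations
  have key : ∀ (i : Fin a) (j : Fin b),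
      (∑ u : ↥S, c u = 0) ∧ (∑ u : ↥S, c u * (u : EuclideanSpace ℝ (Fin a) × EuclideanSpace ℝ (Fin b)).1 i = 0)
      ∧ (∑ u : ↥S, c u * (u : EuclideanSpace ℝ (Fin a) × EuclideanSpace ℝ (Fin b)).2 j = 0)
      ∧ (∑ u : ↥S, c u * (1 - ‖(u : EuclideanSpace ℝ (Fin a) × EuclideanSpace ℝ (Fin b)).1‖^2) = 0) := by
    intro i j
    refine extract Finset.univ c
      (fun u => 1 - ‖(u : EuclideanSpace ℝ (Fin a) × EuclideanSpace ℝ (Fin b)).1‖^2)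
      (fun u => (u : EuclideanSpace ℝ (Fin a) × EuclideanSpace ℝ (Fin b)).1 i)
      (fun u => 1 - ‖(u : EuclideanSpace ℝ (Fin a) × EuclideanSpace ℝ (Fin b)).2‖^2)
      (fun u => (u : EuclideanSpace ℝ (Fin a) × EuclideanSpace ℝ (Fin b)).2 j)
      d (A i) (B j) e ?_
    intro s t
    have h0 := hx (s • EuclideanSpace.single i (1:ℝ), t • EuclideanSpace.single j (1:ℝ))
    simp only at h0
    rw [coordsum A i s, coordsum B j t, norm_smul_single i s] at h0
    have hsum : (∑ u : ↥S, c u *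
          ((1 - ‖s • EuclideanSpace.single i (1:ℝ) - (u:EuclideanSpace ℝ (Fin a) × EuclideanSpace ℝ (Fin b)).1‖^2)
          * (1 - ‖t • EuclideanSpace.single j (1:ℝ) - (u:EuclideanSpace ℝ (Fin a) × EuclideanSpace ℝ (Fin b)).2‖^2)))
        = ∑ u : ↥S, c u *
          (((1 - ‖(u:EuclideanSpace ℝ (Fin a) × EuclideanSpace ℝ (Fin b)).1‖^2)
              + 2*s*((u:EuclideanSpace ℝ (Fin a) × EuclideanSpace ℝ (Fin b)).1 i) - s^2)
          * ((1 - ‖(u:EuclideanSpace ℝ (Fin a) × EuclideanSpace ℝ (Fin b)).2‖^2)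
              + 2*t*((u:EuclideanSpace ℝ (Fin a) × EuclideanSpace ℝ (Fin b)).2 j) - t^2)) := by
      refine Finset.sum_congr rfl fun u _ => ?_
      rw [norm_smul_single_sub, norm_smul_single_sub]
      ring
    rw [hsum] at h0
    linarith
  have key1 : ∑ u : ↥S, c u = 0 := (key ⟨0, ha⟩ ⟨0, hb⟩).1
  have key2 : ∀ i, ∑ u : ↥S, c u * (u : EuclideanSpace ℝ (Fin a) × EuclideanSpace ℝ (Fin b)).1 i = 0 :=
    fun i => (key i ⟨0, hb⟩).2.1
  have key3 : ∀ j, ∑ u : ↥S, c u * (u : EuclideanSpace ℝ (Fin a) × EuclideanSpace ℝ (Fin b)).2 j = 0 :=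
    fun j => (key ⟨0, ha⟩ j).2.2.1
  have key4 : ∑ u : ↥S, c u * ‖(u : EuclideanSpace ℝ (Fin a) × EuclideanSpace ℝ (Fin b)).1‖^2 = 0 := by
    have h4 := (key ⟨0, ha⟩ ⟨0, hb⟩).2.2.2
    have hsplit : ∑ u : ↥S, c u * (1 - ‖(u : EuclideanSpace ℝ (Fin a) × EuclideanSpace ℝ (Fin b)).1‖^2)
        = (∑ u : ↥S, c u) - ∑ u : ↥S, c u * ‖(u : EuclideanSpace ℝ (Fin a) × EuclideanSpace ℝ (Fin b)).1‖^2 := by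
      rw [← Finset.sum_sub_distrib]
      exact Finset.sum_congr rfl fun u _ => by ring
    rw [hsplit, key1] at h4
    linarith
  -- evaluation at points of S
  have hC : ∀ v : ↥S, c v + d + (∑ i, A i * (v : EuclideanSpace ℝ (Fin a) × EuclideanSpace ℝ (Fin b)).1 i)
      + (∑ j, B j * (v : EuclideanSpace ℝ (Fin a) × EuclideanSpace ℝ (Fin b)).2 j)
      + e * ‖(v : EuclideanSpace ℝ (Fin a) × EuclideanSpace ℝ (Fin b)).1‖^2 = 0 := by
    intro v
    have h0 := hx (v : EuclideanSpace ℝ (Fin a) × EuclideanSpace ℝ (Fin b))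
    have hone : (∑ u : ↥S, c u *
        ((1 - ‖(v : EuclideanSpace ℝ (Fin a) × EuclideanSpace ℝ (Fin b)).1 - (u : EuclideanSpace ℝ (Fin a) × EuclideanSpace ℝ (Fin b)).1‖^2)
        * (1 - ‖(v : EuclideanSpace ℝ (Fin a) × EuclideanSpace ℝ (Fin b)).2 - (u : EuclideanSpace ℝ (Fin a) × EuclideanSpace ℝ (Fin b)).2‖^2)))
        = c v := by
      rw [Fintype.sum_eq_single v]
      · simp
      · intro u hu
        have hne : (u : EuclideanSpace ℝ (Fin a) × EuclideanSpace ℝ (Fin b)) ≠ (v : EuclideanSpace ℝ (Fin a) × EuclideanSpace ℝ (Fin b)) :=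
          fun hval => hu (Subtype.ext hval)
        have hdist := hS _ u.2 _ v.2 hne
        rw [Prod.dist_eq] at hdist
        rcases max_choice (dist (u : EuclideanSpace ℝ (Fin a) × EuclideanSpace ℝ (Fin b)).1 (v : EuclideanSpace ℝ (Fin a) × EuclideanSpace ℝ (Fin b)).1)
          (dist (u : EuclideanSpace ℝ (Fin a) × EuclideanSpace ℝ (Fin b)).2 (v : EuclideanSpace ℝ (Fin a) × EuclideanSpace ℝ (Fin b)).2) with hcase | hcase <;>
          rw [hcase] at hdist
        · have : ‖(v : EuclideanSpace ℝ (Fin a) × EuclideanSpace ℝ (Fin b)).1 - (u : EuclideanSpace ℝ (Fin a) × EuclideanSpace ℝ (Fin b)).1‖ = 1 := by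
            rw [← dist_eq_norm, dist_comm]; exact hdist
          rw [this]; norm_num
        · have : ‖(v : EuclideanSpace ℝ (Fin a) × EuclideanSpace ℝ (Fin b)).2 - (u : EuclideanSpace ℝ (Fin a) × EuclideanSpace ℝ (Fin b)).2‖ = 1 := by
            rw [← dist_eq_norm, dist_comm]; exact hdist
          rw [this]; norm_num
    rw [hone] at h0
    exact h0
  -- sum of squares
  have e2 : ∑ v : ↥S, c v * (∑ i, A i * (v : EuclideanSpace ℝ (Fin a) × EuclideanSpace ℝ (Fin b)).1 i) = 0 := by
    have step : ∀ v : ↥S, c v * (∑ i, A i * (v : EuclideanSpace ℝ (Fin a) × EuclideanSpace ℝ (Fin b)).1 i)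
        = ∑ i, A i * (c v * (v : EuclideanSpace ℝ (Fin a) × EuclideanSpace ℝ (Fin b)).1 i) := by
      intro v; rw [Finset.mul_sum]; exact Finset.sum_congr rfl fun i _ => by ring
    rw [Finset.sum_congr rfl fun v _ => step v, Finset.sum_comm]
    refine Finset.sum_eq_zero fun i _ => ?_
    rw [← Finset.mul_sum, key2 i, mul_zero]
  have e3 : ∑ v : ↥S, c v * (∑ j, B j * (v : EuclideanSpace ℝ (Fin a) × EuclideanSpace ℝ (Fin b)).2 j) = 0 := by
    have step : ∀ v : ↥S, c v * (∑ j, B j * (v : EuclideanSpace ℝ (Fin a) × EuclideanSpace ℝ (Fin b)).2 j)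
        = ∑ j, B j * (c v * (v : EuclideanSpace ℝ (Fin a) × EuclideanSpace ℝ (Fin b)).2 j) := by
      intro v; rw [Finset.mul_sum]; exact Finset.sum_congr rfl fun j _ => by ring
    rw [Finset.sum_congr rfl fun v _ => step v, Finset.sum_comm]
    refine Finset.sum_eq_zero fun j _ => ?_
    rw [← Finset.mul_sum, key3 j, mul_zero]
  have e1 : ∑ v : ↥S, c v * d = 0 := by rw [← Finset.sum_mul, key1, zero_mul]
  have e4 : ∑ v : ↥S, c v * (e * ‖(v : EuclideanSpace ℝ (Fin a) × EuclideanSpace ℝ (Fin b)).1‖^2) = 0 := by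
    have step : ∀ v : ↥S, c v * (e * ‖(v : EuclideanSpace ℝ (Fin a) × EuclideanSpace ℝ (Fin b)).1‖^2)
        = e * (c v * ‖(v : EuclideanSpace ℝ (Fin a) × EuclideanSpace ℝ (Fin b)).1‖^2) := fun v => by ring
    rw [Finset.sum_congr rfl fun v _ => step v, ← Finset.mul_sum, key4, mul_zero]
  have hsq : ∑ v : ↥S, c v * c v = 0 := by
    have h0 : ∑ v : ↥S, (c v * c v + c v * d
        + c v * (∑ i, A i * (v : EuclideanSpace ℝ (Fin a) × EuclideanSpace ℝ (Fin b)).1 i)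
        + c v * (∑ j, B j * (v : EuclideanSpace ℝ (Fin a) × EuclideanSpace ℝ (Fin b)).2 j)
        + c v * (e * ‖(v : EuclideanSpace ℝ (Fin a) × EuclideanSpace ℝ (Fin b)).1‖^2)) = 0 := by
      refine Finset.sum_eq_zero fun v _ => ?_
      have h1 := hC v
      have h2 : c v * c v + c v * d
          + c v * (∑ i, A i * (v : EuclideanSpace ℝ (Fin a) × EuclideanSpace ℝ (Fin b)).1 i)
          + c v * (∑ j, B j * (v : EuclideanSpace ℝ (Fin a) × EuclideanSpace ℝ (Fin b)).2 j)
          + c v * (e * ‖(v : EuclideanSpace ℝ (Fin a) × EuclideanSpace ℝ (Fin b)).1‖^2)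
          = c v * (c v + d + (∑ i, A i * (v : EuclideanSpace ℝ (Fin a) × EuclideanSpace ℝ (Fin b)).1 i)
          + (∑ j, B j * (v : EuclideanSpace ℝ (Fin a) × EuclideanSpace ℝ (Fin b)).2 j)
          + e * ‖(v : EuclideanSpace ℝ (Fin a) × EuclideanSpace ℝ (Fin b)).1‖^2) := by ring
      rw [h2, h1, mul_zero]
    rw [Finset.sum_add_distrib, Finset.sum_add_distrib, Finset.sum_add_distrib,
      Finset.sum_add_distrib] at h0
    rw [e1, e2, e3, e4] at h0
    linarith
  have hc0 : ∀ v : ↥S, c v = 0 := by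
    intro v
    have h0 : ∀ v ∈ (Finset.univ : Finset ↥S), 0 ≤ c v * c v := fun v _ => mul_self_nonneg _
    have := (Finset.sum_eq_zero_iff_of_nonneg h0).mp hsq v (Finset.mem_univ v)
    exact mul_self_eq_zero.mp this
  -- now the affine part
  have hx2 : ∀ x : EuclideanSpace ℝ (Fin a) × EuclideanSpace ℝ (Fin b),
      d + (∑ i, A i * x.1 i) + (∑ j, B j * x.2 j) + e * ‖x.1‖^2 = 0 := by
    intro x
    have h0 := hx x
    rw [Finset.sum_eq_zero fun u _ => by rw [hc0 u, zero_mul]] at h0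
    linarith
  have hd0 : d = 0 := by
    have h0 := hx2 (0, 0)
    simp at h0
    exact h0
  have he0 : e = 0 := by
    have h1 := hx2 (EuclideanSpace.single (⟨0, ha⟩ : Fin a) (1:ℝ), 0)
    have h2 := hx2 (-EuclideanSpace.single (⟨0, ha⟩ : Fin a) (1:ℝ), 0)
    have r1 : ((1:ℝ) • EuclideanSpace.single (⟨0, ha⟩ : Fin a) (1:ℝ)) = EuclideanSpace.single (⟨0, ha⟩ : Fin a) (1:ℝ) := one_smul _ _
    have r2 : ((-1:ℝ) • EuclideanSpace.single (⟨0, ha⟩ : Fin a) (1:ℝ)) = -EuclideanSpace.single (⟨0, ha⟩ : Fin a) (1:ℝ) := by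
      simp
    rw [← r1] at h1
    rw [← r2] at h2
    simp only at h1 h2
    rw [coordsum A _ _, norm_smul_single] at h1 h2
    simp at h1 h2
    linarith
  have hA0 : ∀ i, A i = 0 := by
    intro i
    have h1 := hx2 (EuclideanSpace.single i (1:ℝ), 0)
    have r1 : ((1:ℝ) • EuclideanSpace.single i (1:ℝ)) = EuclideanSpace.single i (1:ℝ) := one_smul _ _
    rw [← r1] at h1
    simp only at h1
    rw [coordsum A i 1, norm_smul_single] at h1
    simp at h1
    rw [hd0, he0] at h1
    linarith
  have hB0 : ∀ j, B j = 0 := by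
    intro j
    have h1 := hx2 (0, EuclideanSpace.single j (1:ℝ))
    have r1 : ((1:ℝ) • EuclideanSpace.single j (1:ℝ)) = EuclideanSpace.single j (1:ℝ) := one_smul _ _
    rw [← r1] at h1
    simp only at h1
    rw [coordsum B j 1] at h1
    simp at h1
    rw [hd0] at h1
    linarith
  intro idx
  rcases idx with u | (⟨⟩ | (i | (j | ⟨⟩)))
  · exact hc0 u
  · exact hd0
  · exact hA0 i
  · exact hB0 j
  · exact he0
end
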